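/- Let G be a triangle-free simple graph with maximum degree at most 4 containing a 5-cycle x–y–z–u–v–x on five distinct vertices, where x, z, v have degree exactly 3 and y, u have degree exactly 4. Let x₁, z₁, v₁ be the third neighbors (off the cycle) of x, z, v respectively, and suppose x₁ and v₁ have degree exactly 4 with x₁ ≠ v₁, while z₁ has degree exactly 3. Set S = {x, y, z, u, v, z₁}. If the S-reduced graph G*S admits a 2-PCF 9-coloring, then G admits a 2-PCF 9-coloring. (This is the reduction showing that on a 5-cycle with three 3-vertices in a vertex-minimum counterexample, every 3-vertex has a 4-neighbor off the cycle.) -/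

import Mathlib

open Set

section Helpers

lemma exists_color_notin (s : Set (Fin 9)) (hs : s.ncard ≤ 8) : ∃ c, c ∉ s := by
  by_contra hc
  push_neg at hc
  have : s = Set.univ := Set.eq_univ_of_forall hc
  rw [this, Set.ncard_univ] at hs
  simp at hs

lemma fresh_mem {V : Type*} (G : SimpleGraph V) (ψ : V → Fin 9) (v n : V)
    (hn : G.Adj v n) (hf : ∀ m, G.Adj v m → m ≠ n → ψ m ≠ ψ n) :
    {u | G.Adj v u ∧ ψ u = ψ n}.ncard = 1 := by
  have : {u | G.Adj v u ∧ ψ u = ψ n} = {n} := by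
    ext m
    simp only [Set.mem_setOf_eq, Set.mem_singleton_iff]
    constructor
    · rintro ⟨ha, he⟩
      by_contra hne
      exact hf m ha hne he
    · rintro rfl; exact ⟨hn, rfl⟩
  rw [this, Set.ncard_singleton]

lemma two_le_unique {V : Type*} (G : SimpleGraph V) (ψ : V → Fin 9) (v n₁ n₂ : V)
    (hne : n₁ ≠ n₂) (h1 : G.Adj v n₁) (h2 : G.Adj v n₂)
    (hf1 : ∀ m, G.Adj v m → m ≠ n₁ → ψ m ≠ ψ n₁)
    (hf2 : ∀ m, G.Adj v m → m ≠ n₂ → ψ m ≠ ψ n₂) :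
    2 ≤ {c : Fin 9 | {u | G.Adj v u ∧ ψ u = c}.ncard = 1}.ncard := by
  have hc : ψ n₁ ≠ ψ n₂ := fun he => hf2 n₁ h1 hne he
  have hs : ({ψ n₁, ψ n₂} : Set (Fin 9)) ⊆ {c : Fin 9 | {u | G.Adj v u ∧ ψ u = c}.ncard = 1} := by
    rintro c (rfl | rfl)
    · exact fresh_mem G ψ v n₁ h1 hf1
    · exact fresh_mem G ψ v n₂ h2 hf2
  calc 2 = ({ψ n₁, ψ n₂} : Set (Fin 9)).ncard := (Set.ncard_pair hc).symm
    _ ≤ _ := Set.ncard_le_ncard hs (Set.toFinite _)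

lemma pcf_at_of_two {V : Type*} (G : SimpleGraph V) (ψ : V → Fin 9) (v : V)
    (h2 : 2 ≤ {c : Fin 9 | {u | G.Adj v u ∧ ψ u = c}.ncard = 1}.ncard) :
    min 2 {u | G.Adj v u}.ncard ≤ {c : Fin 9 | {u | G.Adj v u ∧ ψ u = c}.ncard = 1}.ncard :=
  le_trans (min_le_left _ _) h2

lemma notri {V : Type*} {G : SimpleGraph V} (htf : G.CliqueFree 3) {a b c : V}
    (hab : G.Adj a b) (hbc : G.Adj b c) (hac : G.Adj a c) : False := by
  classical
  exact htf {a, b, c} (SimpleGraph.is3Clique_triple_iff.mpr ⟨hab, hac, hbc⟩)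

lemma ncard_le2 (s : Set (Fin 9)) (a b : Fin 9) (h : s ⊆ {a, b}) : s.ncard ≤ 2 :=
  le_trans (Set.ncard_le_ncard h (Set.toFinite _))
    (le_trans (Set.ncard_insert_le _ _) (by simp))

lemma ncard_pair_le (a b : Fin 9) : ({a, b} : Set (Fin 9)).ncard ≤ 2 :=
  ncard_le2 _ a b (fun _ h => h)

lemma ncard_triple_le (a b c : Fin 9) : ({a, b, c} : Set (Fin 9)).ncard ≤ 3 :=
  le_trans (Set.ncard_insert_le _ _) (by have := ncard_pair_le b c; omega)

lemma ncard_quad_le (a b c d : Fin 9) : ({a, b, c, d} : Set (Fin 9)).ncard ≤ 4 :=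
  le_trans (Set.ncard_insert_le _ _) (by have := ncard_triple_le b c d; omega)

lemma ncard_quint_le (a b c d e : Fin 9) : ({a, b, c, d, e} : Set (Fin 9)).ncard ≤ 5 :=
  le_trans (Set.ncard_insert_le _ _) (by have := ncard_quad_le b c d e; omega)

lemma ncard_union_le' (s t : Set (Fin 9)) (m n : ℕ) (hs : s.ncard ≤ m) (ht : t.ncard ≤ n) :
    (s ∪ t).ncard ≤ m + n :=
  le_trans (Set.ncard_union_le _ _) (by omega)

/-- a set with two distinct members has ncard ≠ 1 -/
lemma ncard_ne_one_of_two {α : Type*} (s : Set α) (a b : α) (ha : a ∈ s) (hb : b ∈ s)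
    (hab : a ≠ b) : s.ncard ≠ 1 := by
  intro h
  obtain ⟨c, hc⟩ := Set.ncard_eq_one.mp h
  rw [hc] at ha hb
  exact hab (ha.trans hb.symm)

end Helpers

/-- An `h`-PCF coloring of `G`: a proper coloring `φ` such that for every vertex `v`,
at least `min h (d_G(v))` colors appear on exactly one neighbor of `v`. -/
def SimpleGraph.IsPCFColoring {V α : Type*} (G : SimpleGraph V) (h : ℕ)
    (φ : V → α) : Prop :=
  (∀ ⦃u w : V⦄, G.Adj u w → φ u ≠ φ w) ∧
  ∀ v : V, min h {u | G.Adj v u}.ncard ≤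
    {c : α | {u | G.Adj v u ∧ φ u = c}.ncard = 1}.ncard

/-- `G` admits an `h`-PCF `k`-coloring. -/
def SimpleGraph.HasPCFColoring {V : Type*} (G : SimpleGraph V) (h k : ℕ) : Prop :=
  ∃ φ : V → Fin k, G.IsPCFColoring h φ

/-- The `S`-reduced graph `G*S`: delete `S`, and join two distinct nonadjacent
vertices outside `S` that have a common neighbor in `S` (vertices of `S`
remain as isolated vertices). -/
def SimpleGraph.reduce {V : Type*} (G : SimpleGraph V) (S : Set V) :
    SimpleGraph V where
  Adj u w := u ∉ S ∧ w ∉ S ∧ u ≠ w ∧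
    (G.Adj u w ∨ ∃ s ∈ S, G.Adj u s ∧ G.Adj s w)
  symm := ⟨by
    rintro u w ⟨hu, hw, hne, h | ⟨s, hs, h1, h2⟩⟩
    · exact ⟨hw, hu, hne.symm, Or.inl h.symm⟩
    · exact ⟨hw, hu, hne.symm, Or.inr ⟨s, hs, h2.symm, h1.symm⟩⟩⟩
  loopless := ⟨fun u h => h.2.2.1 rfl⟩

set_option maxHeartbeats 3200000 in
theorem reduce_five_cycle_pendant_three_vertex {V : Type*} [Fintype V]
    (G : SimpleGraph V)
    (hΔ : ∀ a : V, {b | G.Adj a b}.ncard ≤ 4)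
    (htf : G.CliqueFree 3)
    (x y z u v x₁ z₁ v₁ : V)
    (hxy : G.Adj x y) (hyz : G.Adj y z) (hzu : G.Adj z u)
    (huv : G.Adj u v) (hvx : G.Adj v x)
    (hdist : List.Pairwise (· ≠ ·) [x, y, z, u, v])
    (hdx : {a | G.Adj x a}.ncard = 3)
    (hdz : {a | G.Adj z a}.ncard = 3)
    (hdv : {a | G.Adj v a}.ncard = 3)
    (hdy : {a | G.Adj y a}.ncard = 4)
    (hdu : {a | G.Adj u a}.ncard = 4)
    (hxx₁ : G.Adj x x₁) (hzz₁ : G.Adj z z₁) (hvv₁ : G.Adj v v₁)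
    (hx₁ : x₁ ∉ ({x, y, z, u, v} : Set V))
    (hz₁ : z₁ ∉ ({x, y, z, u, v} : Set V))
    (hv₁ : v₁ ∉ ({x, y, z, u, v} : Set V))
    (hdx₁ : {a | G.Adj x₁ a}.ncard = 4)
    (hdv₁ : {a | G.Adj v₁ a}.ncard = 4)
    (hx₁v₁ : x₁ ≠ v₁)
    (hdz₁ : {a | G.Adj z₁ a}.ncard = 3)
    (h : (G.reduce {x, y, z, u, v, z₁}).HasPCFColoring 2 9) :
    G.HasPCFColoring 2 9 := by
  classical
  obtain ⟨φ, hprop, hpcf⟩ := h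
  simp only [List.pairwise_cons, List.mem_cons, List.mem_singleton, List.not_mem_nil,
    or_false, List.Pairwise.nil, and_true, List.not_mem_nil,
    IsEmpty.forall_iff, forall_eq_or_imp, forall_eq] at hdist
  obtain ⟨⟨dxy, dxz, dxu, dxv⟩, ⟨dyz, dyu, dyv⟩, ⟨dzu, dzv⟩, duv, -⟩ := hdist
  simp only [Set.mem_insert_iff, Set.mem_singleton_iff, not_or] at hx₁ hz₁ hv₁
  obtain ⟨nx₁x, nx₁y, nx₁z, nx₁u, nx₁v⟩ := hx₁
  obtain ⟨nz₁x, nz₁y, nz₁z, nz₁u, nz₁v⟩ := hz₁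
  obtain ⟨nv₁x, nv₁y, nv₁z, nv₁u, nv₁v⟩ := hv₁
  have dx₁z₁ : x₁ ≠ z₁ := by intro hh; rw [hh, hdz₁] at hdx₁; omega
  have dv₁z₁ : v₁ ≠ z₁ := by intro hh; rw [hh, hdz₁] at hdv₁; omega
  -- nonadjacencies from triangle-freeness
  have nadj_xz : ¬G.Adj x z := fun hh => notri htf hxy hyz hh
  have nadj_yu : ¬G.Adj y u := fun hh => notri htf hyz hzu hh
  have nadj_zv : ¬G.Adj z v := fun hh => notri htf hzu huv hh
  have nadj_ux : ¬G.Adj u x := fun hh => notri htf huv hvx hh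
  have nadj_vy : ¬G.Adj v y := fun hh => notri htf hvx hxy hh
  have nadj_yz₁ : ¬G.Adj y z₁ := fun hh => notri htf hyz hzz₁ hh
  have nadj_uz₁ : ¬G.Adj u z₁ := fun hh => notri htf hzu hh hzz₁
  have nadj_yx₁ : ¬G.Adj y x₁ := fun hh => notri htf hxy hh hxx₁
  have nadj_uv₁ : ¬G.Adj u v₁ := fun hh => notri htf huv hvv₁ hh
  -- neighborhoods of the degree-3 vertices
  have NX : {w | G.Adj x w} = {y, v, x₁} := by
    have hsub : ({y, v, x₁} : Set V) ⊆ {w | G.Adj x w} := by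
      rintro w (rfl | rfl | rfl)
      · exact hxy
      · exact hvx.symm
      · exact hxx₁
    have hc3 : ({y, v, x₁} : Set V).ncard = 3 :=
      Set.ncard_eq_three.mpr ⟨y, v, x₁, dyv, Ne.symm nx₁y, Ne.symm nx₁v, rfl⟩
    exact (Set.eq_of_subset_of_ncard_le hsub (by rw [hdx, hc3]) (Set.toFinite _)).symm
  have NZ : {w | G.Adj z w} = {y, u, z₁} := by
    have hsub : ({y, u, z₁} : Set V) ⊆ {w | G.Adj z w} := by
      rintro w (rfl | rfl | rfl)
      · exact hyz.symm
      · exact hzu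
      · exact hzz₁
    have hc3 : ({y, u, z₁} : Set V).ncard = 3 :=
      Set.ncard_eq_three.mpr ⟨y, u, z₁, dyu, Ne.symm nz₁y, Ne.symm nz₁u, rfl⟩
    exact (Set.eq_of_subset_of_ncard_le hsub (by rw [hdz, hc3]) (Set.toFinite _)).symm
  have NV : {w | G.Adj v w} = {u, x, v₁} := by
    have hsub : ({u, x, v₁} : Set V) ⊆ {w | G.Adj v w} := by
      rintro w (rfl | rfl | rfl)
      · exact huv.symm
      · exact hvx
      · exact hvv₁
    have hc3 : ({u, x, v₁} : Set V).ncard = 3 :=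
      Set.ncard_eq_three.mpr ⟨u, x, v₁, Ne.symm dxu, Ne.symm nv₁u, Ne.symm nv₁x, rfl⟩
    exact (Set.eq_of_subset_of_ncard_le hsub (by rw [hdv, hc3]) (Set.toFinite _)).symm
  -- more nonadjacencies via the neighborhoods
  have nadj_xz₁ : ¬G.Adj x z₁ := by
    intro hh
    have : z₁ ∈ ({y, v, x₁} : Set V) := NX ▸ hh
    rcases this with rfl | rfl | rfl
    · exact nz₁y rfl
    · exact nz₁v rfl
    · exact dx₁z₁ rfl
  have nadj_vz₁ : ¬G.Adj v z₁ := by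
    intro hh
    have : z₁ ∈ ({u, x, v₁} : Set V) := NV ▸ hh
    rcases this with rfl | rfl | rfl
    · exact nz₁u rfl
    · exact nz₁x rfl
    · exact dv₁z₁ rfl
  have nadj_xv₁ : ¬G.Adj x v₁ := by
    intro hh
    have : v₁ ∈ ({y, v, x₁} : Set V) := NX ▸ hh
    rcases this with rfl | rfl | rfl
    · exact nv₁y rfl
    · exact nv₁v rfl
    · exact hx₁v₁ rfl
  have nadj_vx₁ : ¬G.Adj v x₁ := by
    intro hh
    have : x₁ ∈ ({u, x, v₁} : Set V) := NV ▸ hh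
    rcases this with rfl | rfl | rfl
    · exact nx₁u rfl
    · exact nx₁x rfl
    · exact hx₁v₁ rfl
  have nadj_zx₁ : ¬G.Adj z x₁ := by
    intro hh
    have : x₁ ∈ ({y, u, z₁} : Set V) := NZ ▸ hh
    rcases this with rfl | rfl | rfl
    · exact nx₁y rfl
    · exact nx₁u rfl
    · exact dx₁z₁ rfl
  have nadj_zv₁ : ¬G.Adj z v₁ := by
    intro hh
    have : v₁ ∈ ({y, u, z₁} : Set V) := NZ ▸ hh
    rcases this with rfl | rfl | rfl
    · exact nv₁y rfl
    · exact nv₁u rfl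
    · exact dv₁z₁ rfl
  -- extract the two remaining neighbors of y, u, z₁
  have extract2 : ∀ (s t w : V), G.Adj w s → G.Adj w t → s ≠ t →
      {m | G.Adj w m}.ncard = 4 → ∃ n₁ n₂, n₁ ≠ n₂ ∧ {m | G.Adj w m} \ {s, t} = {n₁, n₂} := by
    intro s t w hws hwt hst hd4
    have hsub : ({s, t} : Set V) ⊆ {m | G.Adj w m} := by
      rintro m (rfl | rfl); exacts [hws, hwt]
    have hdm : ({m | G.Adj w m} \ {s, t}).ncard = 2 := by
      rw [Set.ncard_diff hsub (Set.toFinite _), hd4, Set.ncard_pair hst]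
    exact Set.ncard_eq_two.mp hdm
  obtain ⟨a₂, b₂, dab, hNYd⟩ := extract2 x z y hxy.symm hyz dxz hdy
  obtain ⟨c₂, d₂, dcd, hNUd⟩ := extract2 z v u hzu.symm huv dzv hdu
  have hpq : ∃ n₁ n₂, n₁ ≠ n₂ ∧ {m | G.Adj z₁ m} \ {z} = {n₁, n₂} := by
    have hsub : ({z} : Set V) ⊆ {m | G.Adj z₁ m} := by rintro m rfl; exact hzz₁.symm
    have hdm : ({m | G.Adj z₁ m} \ {z}).ncard = 2 := by
      rw [Set.ncard_diff hsub (Set.toFinite _), hdz₁, Set.ncard_singleton]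
    exact Set.ncard_eq_two.mp hdm
  obtain ⟨p₂, q₂, dpq, hNZ₁d⟩ := hpq
  -- basic facts about the extracted vertices
  have hya : G.Adj y a₂ := by
    have : a₂ ∈ {m | G.Adj y m} \ {x, z} := by rw [hNYd]; exact Or.inl rfl
    exact this.1
  have hyb : G.Adj y b₂ := by
    have : b₂ ∈ {m | G.Adj y m} \ {x, z} := by rw [hNYd]; exact Or.inr rfl
    exact this.1
  have hax : a₂ ≠ x ∧ a₂ ≠ z := by
    have : a₂ ∈ {m | G.Adj y m} \ {x, z} := by rw [hNYd]; exact Or.inl rfl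
    have := this.2; simpa [not_or] using this
  have hbx : b₂ ≠ x ∧ b₂ ≠ z := by
    have : b₂ ∈ {m | G.Adj y m} \ {x, z} := by rw [hNYd]; exact Or.inr rfl
    have := this.2; simpa [not_or] using this
  have huc : G.Adj u c₂ := by
    have : c₂ ∈ {m | G.Adj u m} \ {z, v} := by rw [hNUd]; exact Or.inl rfl
    exact this.1
  have hud : G.Adj u d₂ := by
    have : d₂ ∈ {m | G.Adj u m} \ {z, v} := by rw [hNUd]; exact Or.inr rfl
    exact this.1
  have hcz : c₂ ≠ z ∧ c₂ ≠ v := by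
    have : c₂ ∈ {m | G.Adj u m} \ {z, v} := by rw [hNUd]; exact Or.inl rfl
    have := this.2; simpa [not_or] using this
  have hdz' : d₂ ≠ z ∧ d₂ ≠ v := by
    have : d₂ ∈ {m | G.Adj u m} \ {z, v} := by rw [hNUd]; exact Or.inr rfl
    have := this.2; simpa [not_or] using this
  have hz₁p : G.Adj z₁ p₂ := by
    have : p₂ ∈ {m | G.Adj z₁ m} \ {z} := by rw [hNZ₁d]; exact Or.inl rfl
    exact this.1
  have hz₁q : G.Adj z₁ q₂ := by
    have : q₂ ∈ {m | G.Adj z₁ m} \ {z} := by rw [hNZ₁d]; exact Or.inr rfl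
    exact this.1
  have hpz : p₂ ≠ z := by
    have : p₂ ∈ {m | G.Adj z₁ m} \ {z} := by rw [hNZ₁d]; exact Or.inl rfl
    simpa using this.2
  have hqz : q₂ ≠ z := by
    have : q₂ ∈ {m | G.Adj z₁ m} \ {z} := by rw [hNZ₁d]; exact Or.inr rfl
    simpa using this.2
  -- full neighborhoods of y, u, z₁
  have NY : {w | G.Adj y w} = {x, z, a₂, b₂} := by
    ext w
    simp only [Set.mem_setOf_eq, Set.mem_insert_iff, Set.mem_singleton_iff]
    constructor
    · intro hw
      by_cases h1 : w = x
      · exact Or.inl h1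
      by_cases h2 : w = z
      · exact Or.inr (Or.inl h2)
      have : w ∈ {m | G.Adj y m} \ {x, z} := ⟨hw, by simp [h1, h2]⟩
      rw [hNYd] at this
      rcases this with rfl | rfl
      · exact Or.inr (Or.inr (Or.inl rfl))
      · exact Or.inr (Or.inr (Or.inr rfl))
    · rintro (rfl | rfl | rfl | rfl)
      exacts [hxy.symm, hyz, hya, hyb]
  have NU : {w | G.Adj u w} = {z, v, c₂, d₂} := by
    ext w
    simp only [Set.mem_setOf_eq, Set.mem_insert_iff, Set.mem_singleton_iff]
    constructor
    · intro hw
      by_cases h1 : w = z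
      · exact Or.inl h1
      by_cases h2 : w = v
      · exact Or.inr (Or.inl h2)
      have : w ∈ {m | G.Adj u m} \ {z, v} := ⟨hw, by simp [h1, h2]⟩
      rw [hNUd] at this
      rcases this with rfl | rfl
      · exact Or.inr (Or.inr (Or.inl rfl))
      · exact Or.inr (Or.inr (Or.inr rfl))
    · rintro (rfl | rfl | rfl | rfl)
      exacts [hzu.symm, huv, huc, hud]
  have NZ₁ : {w | G.Adj z₁ w} = {z, p₂, q₂} := by
    ext w
    simp only [Set.mem_setOf_eq, Set.mem_insert_iff, Set.mem_singleton_iff]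
    constructor
    · intro hw
      by_cases h1 : w = z
      · exact Or.inl h1
      have : w ∈ {m | G.Adj z₁ m} \ {z} := ⟨hw, by simp [h1]⟩
      rw [hNZ₁d] at this
      rcases this with rfl | rfl
      · exact Or.inr (Or.inl rfl)
      · exact Or.inr (Or.inr rfl)
    · rintro (rfl | rfl | rfl)
      exacts [hzz₁.symm, hz₁p, hz₁q]
  -- partner nonadjacency
  have nadj_ab : ¬G.Adj a₂ b₂ := fun hh => notri htf hya hh hyb
  have nadj_cd : ¬G.Adj c₂ d₂ := fun hh => notri htf huc hh hud
  have nadj_pq : ¬G.Adj p₂ q₂ := fun hh => notri htf hz₁p hh hz₁q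
  set S : Set V := {x, y, z, u, v, z₁} with hSdef
  have hxS : x ∈ S := by simp [hSdef]
  have hyS : y ∈ S := by simp [hSdef]
  have hzS : z ∈ S := by simp [hSdef]
  have huS : u ∈ S := by simp [hSdef]
  have hvS : v ∈ S := by simp [hSdef]
  have hz₁S : z₁ ∈ S := by simp [hSdef]
  have memS : ∀ w, w ∈ S ↔ (w = x ∨ w = y ∨ w = z ∨ w = u ∨ w = v ∨ w = z₁) := by
    intro w; simp [hSdef]
  have hx₁S : x₁ ∉ S := by
    rw [memS]; push_neg; exact ⟨nx₁x, nx₁y, nx₁z, nx₁u, nx₁v, dx₁z₁⟩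
  have hv₁S : v₁ ∉ S := by
    rw [memS]; push_neg; exact ⟨nv₁x, nv₁y, nv₁z, nv₁u, nv₁v, dv₁z₁⟩
  have ha₂S : a₂ ∉ S := by
    rw [memS]; push_neg
    refine ⟨hax.1, fun hh => G.irrefl (hh ▸ hya), hax.2, fun hh => nadj_yu (hh ▸ hya),
      fun hh => nadj_vy (hh ▸ hya).symm, fun hh => nadj_yz₁ (hh ▸ hya)⟩
  have hb₂S : b₂ ∉ S := by
    rw [memS]; push_neg
    refine ⟨hbx.1, fun hh => G.irrefl (hh ▸ hyb), hbx.2, fun hh => nadj_yu (hh ▸ hyb),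
      fun hh => nadj_vy (hh ▸ hyb).symm, fun hh => nadj_yz₁ (hh ▸ hyb)⟩
  have hc₂S : c₂ ∉ S := by
    rw [memS]; push_neg
    refine ⟨fun hh => nadj_ux (hh ▸ huc), fun hh => nadj_yu (hh ▸ huc).symm, hcz.1,
      fun hh => G.irrefl (hh ▸ huc), hcz.2, fun hh => nadj_uz₁ (hh ▸ huc)⟩
  have hd₂S : d₂ ∉ S := by
    rw [memS]; push_neg
    refine ⟨fun hh => nadj_ux (hh ▸ hud), fun hh => nadj_yu (hh ▸ hud).symm, hdz'.1,
      fun hh => G.irrefl (hh ▸ hud), hdz'.2, fun hh => nadj_uz₁ (hh ▸ hud)⟩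
  have hp₂S : p₂ ∉ S := by
    rw [memS]; push_neg
    refine ⟨fun hh => nadj_xz₁ (hh ▸ hz₁p).symm, fun hh => nadj_yz₁ (hh ▸ hz₁p).symm, hpz,
      fun hh => nadj_uz₁ (hh ▸ hz₁p).symm, fun hh => nadj_vz₁ (hh ▸ hz₁p).symm,
      fun hh => G.irrefl (hh ▸ hz₁p)⟩
  have hq₂S : q₂ ∉ S := by
    rw [memS]; push_neg
    refine ⟨fun hh => nadj_xz₁ (hh ▸ hz₁q).symm, fun hh => nadj_yz₁ (hh ▸ hz₁q).symm, hqz,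
      fun hh => nadj_uz₁ (hh ▸ hz₁q).symm, fun hh => nadj_vz₁ (hh ▸ hz₁q).symm,
      fun hh => G.irrefl (hh ▸ hz₁q)⟩
  -- classification of outside vertices adjacent to S-vertices
  have clx : ∀ w, w ∉ S → G.Adj w x → w = x₁ := by
    intro w hwS hw
    have : w ∈ ({y, v, x₁} : Set V) := NX ▸ hw.symm
    rcases this with rfl | rfl | rfl
    · exact absurd hyS hwS
    · exact absurd hvS hwS
    · rfl
  have cly : ∀ w, w ∉ S → G.Adj w y → w = a₂ ∨ w = b₂ := by
    intro w hwS hw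
    have : w ∈ ({x, z, a₂, b₂} : Set V) := NY ▸ hw.symm
    rcases this with rfl | rfl | rfl | rfl
    · exact absurd hxS hwS
    · exact absurd hzS hwS
    · exact Or.inl rfl
    · exact Or.inr rfl
  have clz : ∀ w, w ∉ S → G.Adj w z → False := by
    intro w hwS hw
    have : w ∈ ({y, u, z₁} : Set V) := NZ ▸ hw.symm
    rcases this with rfl | rfl | rfl
    · exact absurd hyS hwS
    · exact absurd huS hwS
    · exact absurd hz₁S hwS
  have clu : ∀ w, w ∉ S → G.Adj w u → w = c₂ ∨ w = d₂ := by
    intro w hwS hw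
    have : w ∈ ({z, v, c₂, d₂} : Set V) := NU ▸ hw.symm
    rcases this with rfl | rfl | rfl | rfl
    · exact absurd hzS hwS
    · exact absurd hvS hwS
    · exact Or.inl rfl
    · exact Or.inr rfl
  have clv : ∀ w, w ∉ S → G.Adj w v → w = v₁ := by
    intro w hwS hw
    have : w ∈ ({u, x, v₁} : Set V) := NV ▸ hw.symm
    rcases this with rfl | rfl | rfl
    · exact absurd huS hwS
    · exact absurd hxS hwS
    · rfl
  have clz₁ : ∀ w, w ∉ S → G.Adj w z₁ → w = p₂ ∨ w = q₂ := by
    intro w hwS hw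
    have : w ∈ ({z, p₂, q₂} : Set V) := NZ₁ ▸ hw.symm
    rcases this with rfl | rfl | rfl
    · exact absurd hzS hwS
    · exact Or.inl rfl
    · exact Or.inr rfl
  -- colors of reduce-adjacent pairs differ
  have hredne : ∀ w₁ w₂ : V, w₁ ∉ S → w₂ ∉ S → w₁ ≠ w₂ →
      (G.Adj w₁ w₂ ∨ ∃ s ∈ S, G.Adj w₁ s ∧ G.Adj s w₂) → φ w₁ ≠ φ w₂ := by
    intro w₁ w₂ h1 h2 h3 h4
    exact hprop (show (G.reduce S).Adj w₁ w₂ from ⟨h1, h2, h3, h4⟩)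
  have φab : φ a₂ ≠ φ b₂ := hredne _ _ ha₂S hb₂S dab (Or.inr ⟨y, hyS, hya.symm, hyb⟩)
  have φcd : φ c₂ ≠ φ d₂ := hredne _ _ hc₂S hd₂S dcd (Or.inr ⟨u, huS, huc.symm, hud⟩)
  have φpq : φ p₂ ≠ φ q₂ := hredne _ _ hp₂S hq₂S dpq (Or.inr ⟨z₁, hz₁S, hz₁p.symm, hz₁q⟩)
  -- outside-neighborhood color machinery
  set No : V → Set V := fun w => {m | G.Adj w m} \ S with hNo
  set cs : V → Set (Fin 9) := fun w => φ '' No w with hcsd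
  set AS : V → Set (Fin 9) := fun w => if (cs w).ncard ≤ 2 then cs w else ∅ with hASd
  have hAS2 : ∀ w, (AS w).ncard ≤ 2 := by
    intro w; rw [hASd]; dsimp only; split_ifs with hh
    · exact hh
    · simp
  have hASeq : ∀ w, (cs w).ncard ≤ 2 → AS w = cs w := by
    intro w hh; rw [hASd]; dsimp only; rw [if_pos hh]
  have hnotcs : ∀ w (c : Fin 9), (cs w).ncard ≤ 2 → c ∉ AS w →
      ∀ m, G.Adj w m → m ∉ S → c ≠ φ m := by
    intro w c hle hc m hm hmS hce
    apply hc
    rw [hASeq w hle]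
    exact ⟨m, ⟨hm, hmS⟩, hce.symm⟩
  have hcsle2 : ∀ w t₁ t₂, t₁ ∈ S → t₂ ∈ S → t₁ ≠ t₂ → G.Adj w t₁ → G.Adj w t₂ →
      (cs w).ncard ≤ 2 := by
    intro w t₁ t₂ ht₁ ht₂ htt h1 h2
    have e1 : (cs w).ncard ≤ (No w).ncard := by
      rw [hcsd]; exact Set.ncard_image_le (Set.toFinite _)
    have e2 : No w ⊆ {m | G.Adj w m} \ {t₁, t₂} := by
      rintro m ⟨hm1, hm2⟩
      exact ⟨hm1, by rintro (rfl | rfl); exacts [hm2 ht₁, hm2 ht₂]⟩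
    have e3 : ({t₁, t₂} : Set V) ⊆ {m | G.Adj w m} := by
      rintro m (rfl | rfl); exacts [h1, h2]
    have e4 : ({m | G.Adj w m} \ {t₁, t₂}).ncard = {m | G.Adj w m}.ncard - 2 := by
      rw [Set.ncard_diff e3 (Set.toFinite _), Set.ncard_pair htt]
    have e5 := hΔ w
    have e6 := Set.ncard_le_ncard e2 (Set.toFinite _)
    omega
  -- choose W (color of z₁), preferring a color in FY
  set FY : Set (Fin 9) := {φ a₂, φ b₂, φ x₁} ∪ (AS a₂ ∪ AS b₂) with hFYd
  have hFY7 : FY.ncard ≤ 7 := by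
    rw [hFYd]
    exact ncard_union_le' _ _ 3 4 (ncard_triple_le _ _ _)
      (ncard_union_le' _ _ 2 2 (hAS2 _) (hAS2 _))
  set LW : Set (Fin 9) := {φ p₂, φ q₂} ∪ (AS p₂ ∪ AS q₂) with hLWd
  have hLW6 : LW.ncard ≤ 6 := by
    rw [hLWd]
    exact ncard_union_le' _ _ 2 4 (ncard_pair_le _ _)
      (ncard_union_le' _ _ 2 2 (hAS2 _) (hAS2 _))
  have hWex : ∃ W, W ∉ LW ∧ ((FY \ LW).Nonempty → W ∈ FY) := by
    by_cases hWp : (FY \ LW).Nonempty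
    · obtain ⟨W, hW1, hW2⟩ := hWp
      exact ⟨W, hW2, fun _ => hW1⟩
    · obtain ⟨W, hW⟩ := exists_color_notin LW (by omega)
      exact ⟨W, hW, fun hh => absurd hh hWp⟩
  obtain ⟨W, hWLW, hWpref⟩ := hWex
  have hWmem := hWLW
  rw [hLWd] at hWmem
  simp only [Set.mem_union, Set.mem_insert_iff, Set.mem_singleton_iff, not_or] at hWmem
  obtain ⟨⟨hWp, hWq⟩, hWAp, hWAq⟩ := hWmem
  -- choose U
  set LU : Set (Fin 9) := {φ c₂, φ d₂, φ v₁, W} ∪ (AS c₂ ∪ AS d₂) with hLUd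
  have hLU8 : LU.ncard ≤ 8 := by
    rw [hLUd]
    exact ncard_union_le' _ _ 4 4 (ncard_quad_le _ _ _ _)
      (ncard_union_le' _ _ 2 2 (hAS2 _) (hAS2 _))
  obtain ⟨U, hULU⟩ := exists_color_notin LU hLU8
  have hUmem := hULU
  rw [hLUd] at hUmem
  simp only [Set.mem_union, Set.mem_insert_iff, Set.mem_singleton_iff, not_or] at hUmem
  obtain ⟨⟨hUc, hUd, hUv₁, hUW⟩, hUAc, hUAd⟩ := hUmem
  -- choose Y
  have hLY8 : (FY ∪ {U, W}).ncard ≤ 8 := by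
    by_cases hca : (FY \ LW).Nonempty
    · have hWFY := hWpref hca
      have hsub : FY ∪ {U, W} ⊆ insert U FY := by
        rintro c (hc | rfl | rfl)
        · exact Set.mem_insert_of_mem _ hc
        · exact Set.mem_insert _ _
        · exact Set.mem_insert_of_mem _ hWFY
      have := Set.ncard_le_ncard hsub (Set.toFinite _)
      have := Set.ncard_insert_le U FY
      omega
    · have hsub : FY ⊆ LW := by
        intro c hc
        by_contra hc2
        exact hca ⟨c, hc, hc2⟩
      have h1 : FY.ncard ≤ 6 := le_trans (Set.ncard_le_ncard hsub (Set.toFinite _)) hLW6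
      have := ncard_union_le' FY {U, W} 6 2 h1 (ncard_pair_le _ _)
      omega
  obtain ⟨Y, hYLY⟩ := exists_color_notin _ hLY8
  have hYmem := hYLY
  simp only [hFYd, Set.mem_union, Set.mem_insert_iff, Set.mem_singleton_iff, not_or] at hYmem
  obtain ⟨⟨⟨hYa, hYb, hYx₁⟩, hYAa, hYAb⟩, hYU, hYW⟩ := hYmem
  -- choose Z
  have hLZ7 : (({Y, U, W} : Set (Fin 9)) ∪ ({φ p₂, φ q₂} ∪ {φ a₂, φ b₂})).ncard ≤ 7 :=
    ncard_union_le' _ _ 3 4 (ncard_triple_le _ _ _)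
      (ncard_union_le' _ _ 2 2 (ncard_pair_le _ _) (ncard_pair_le _ _))
  obtain ⟨Z, hZLZ⟩ := exists_color_notin _ (by omega : (({Y, U, W} : Set (Fin 9)) ∪ ({φ p₂, φ q₂} ∪ {φ a₂, φ b₂})).ncard ≤ 8)
  have hZmem := hZLZ
  simp only [Set.mem_union, Set.mem_insert_iff, Set.mem_singleton_iff, not_or] at hZmem
  obtain ⟨⟨hZY, hZU, hZW⟩, ⟨hZp, hZq⟩, hZa, hZb⟩ := hZmem
  -- choose V' (named VV)
  set gate5 : Prop := G.Adj v₁ z₁ ∧ (cs v₁).ncard ≤ 1 with hgate5d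
  set LV : Set (Fin 9) := ({φ v₁, φ x₁, U, Y} : Set (Fin 9)) ∪ AS v₁ ∪
    (if Z = φ c₂ ∨ Z = φ d₂ then ({φ c₂, φ d₂} : Set (Fin 9)) else ∅) ∪
    (if gate5 then ({W} : Set (Fin 9)) else ∅) with hLVd
  have hLV8 : LV.ncard ≤ 8 := by
    rw [hLVd]
    by_cases hg5 : gate5
    · have hAv1 : (AS v₁).ncard ≤ 1 := by
        rw [hASeq v₁ (le_trans hg5.2 (by omega))]
        exact hg5.2
      refine ncard_union_le' _ _ 7 1 (ncard_union_le' _ _ 5 2 (ncard_union_le' _ _ 4 1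
        (ncard_quad_le _ _ _ _) hAv1) ?_) ?_
      · split_ifs
        · exact ncard_pair_le _ _
        · simp
      · rw [if_pos hg5]; simp
    · rw [if_neg hg5]
      have : (({φ v₁, φ x₁, U, Y} : Set (Fin 9)) ∪ AS v₁ ∪
          (if Z = φ c₂ ∨ Z = φ d₂ then ({φ c₂, φ d₂} : Set (Fin 9)) else ∅)).ncard ≤ 8 := by
        refine ncard_union_le' _ _ 6 2 (ncard_union_le' _ _ 4 2 (ncard_quad_le _ _ _ _)
          (hAS2 _)) ?_
        split_ifs
        · exact ncard_pair_le _ _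
        · simp
      simpa using this
  obtain ⟨VV, hVLV⟩ := exists_color_notin LV hLV8
  have hVmem := hVLV
  rw [hLVd] at hVmem
  simp only [Set.mem_union, Set.mem_insert_iff, Set.mem_singleton_iff, not_or] at hVmem
  obtain ⟨⟨⟨⟨hVv₁, hVx₁, hVU, hVY⟩, hVAv₁⟩, hVbur⟩, hVgate⟩ := hVmem
  have hVburden : (Z = φ c₂ ∨ Z = φ d₂) → VV ≠ φ c₂ ∧ VV ≠ φ d₂ := by
    intro hP
    rw [if_pos hP] at hVbur
    simp only [Set.mem_insert_iff, Set.mem_singleton_iff, not_or] at hVbur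
    exact hVbur
  have hVgate' : gate5 → VV ≠ W := by
    intro hP
    rw [if_pos hP] at hVgate
    simpa using hVgate
  -- choose X
  set LX : Set (Fin 9) := ({φ x₁, φ v₁, Y, U, VV} : Set (Fin 9)) ∪ AS x₁ ∪
    (if G.Adj x₁ z₁ then ({W} : Set (Fin 9)) else ∅) with hLXd
  have hLX8 : LX.ncard ≤ 8 := by
    rw [hLXd]
    refine ncard_union_le' _ _ 7 1 (ncard_union_le' _ _ 5 2 (ncard_quint_le _ _ _ _ _)
      (hAS2 _)) ?_
    split_ifs
    · simp
    · simp
  obtain ⟨X, hXLX⟩ := exists_color_notin LX hLX8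
  have hXmem := hXLX
  rw [hLXd] at hXmem
  simp only [Set.mem_union, Set.mem_insert_iff, Set.mem_singleton_iff, not_or] at hXmem
  obtain ⟨⟨⟨hXx₁, hXv₁, hXY, hXU, hXV⟩, hXAx₁⟩, hXg⟩ := hXmem
  have hXgate : G.Adj x₁ z₁ → X ≠ W := by
    intro hP
    rw [if_pos hP] at hXg
    simpa using hXg
  -- the extended coloring
  set ψ : V → Fin 9 := fun w => if w = x then X else if w = y then Y else if w = z then Z
    else if w = u then U else if w = v then VV else if w = z₁ then W else φ w with hψd
  have hψx : ψ x = X := by simp [hψd]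
  have hψy : ψ y = Y := by simp [hψd, Ne.symm dxy]
  have hψz : ψ z = Z := by simp [hψd, Ne.symm dxz, Ne.symm dyz]
  have hψu : ψ u = U := by simp [hψd, Ne.symm dxu, Ne.symm dyu, Ne.symm dzu]
  have hψv : ψ v = VV := by simp [hψd, Ne.symm dxv, Ne.symm dyv, Ne.symm dzv, Ne.symm duv]
  have hψz₁ : ψ z₁ = W := by simp [hψd, nz₁x, nz₁y, nz₁z, nz₁u, nz₁v]
  have hψout : ∀ w, w ∉ S → ψ w = φ w := by
    intro w hw
    rw [memS] at hw
    push_neg at hw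
    obtain ⟨e1, e2, e3, e4, e5, e6⟩ := hw
    simp only [hψd]
    rw [if_neg e1, if_neg e2, if_neg e3, if_neg e4, if_neg e5, if_neg e6]
  refine ⟨ψ, ?_, ?_⟩
  · -- properness
    have hSx : ∀ m, G.Adj x m → ψ x ≠ ψ m := by
      intro m hm
      have : m ∈ ({y, v, x₁} : Set V) := NX ▸ hm
      rcases this with rfl | rfl | rfl
      · rw [hψx, hψy]; exact hXY
      · rw [hψx, hψv]; exact hXV
      · rw [hψx, hψout _ hx₁S]; exact hXx₁
    have hSy : ∀ m, G.Adj y m → ψ y ≠ ψ m := by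
      intro m hm
      have : m ∈ ({x, z, a₂, b₂} : Set V) := NY ▸ hm
      rcases this with rfl | rfl | rfl | rfl
      · rw [hψy, hψx]; exact Ne.symm hXY
      · rw [hψy, hψz]; exact Ne.symm hZY
      · rw [hψy, hψout _ ha₂S]; exact hYa
      · rw [hψy, hψout _ hb₂S]; exact hYb
    have hSz : ∀ m, G.Adj z m → ψ z ≠ ψ m := by
      intro m hm
      have : m ∈ ({y, u, z₁} : Set V) := NZ ▸ hm
      rcases this with rfl | rfl | rfl
      · rw [hψz, hψy]; exact hZY
      · rw [hψz, hψu]; exact hZU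
      · rw [hψz, hψz₁]; exact hZW
    have hSu : ∀ m, G.Adj u m → ψ u ≠ ψ m := by
      intro m hm
      have : m ∈ ({z, v, c₂, d₂} : Set V) := NU ▸ hm
      rcases this with rfl | rfl | rfl | rfl
      · rw [hψu, hψz]; exact Ne.symm hZU
      · rw [hψu, hψv]; exact Ne.symm hVU
      · rw [hψu, hψout _ hc₂S]; exact hUc
      · rw [hψu, hψout _ hd₂S]; exact hUd
    have hSv : ∀ m, G.Adj v m → ψ v ≠ ψ m := by
      intro m hm
      have : m ∈ ({u, x, v₁} : Set V) := NV ▸ hm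
      rcases this with rfl | rfl | rfl
      · rw [hψv, hψu]; exact hVU
      · rw [hψv, hψx]; exact Ne.symm hXV
      · rw [hψv, hψout _ hv₁S]; exact hVv₁
    have hSz₁ : ∀ m, G.Adj z₁ m → ψ z₁ ≠ ψ m := by
      intro m hm
      have : m ∈ ({z, p₂, q₂} : Set V) := NZ₁ ▸ hm
      rcases this with rfl | rfl | rfl
      · rw [hψz₁, hψz]; exact Ne.symm hZW
      · rw [hψz₁, hψout _ hp₂S]; exact hWp
      · rw [hψz₁, hψout _ hq₂S]; exact hWq
    intro w₁ w₂ hadj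
    by_cases h1 : w₁ ∈ S
    · rw [memS] at h1
      rcases h1 with rfl | rfl | rfl | rfl | rfl | rfl
      exacts [hSx _ hadj, hSy _ hadj, hSz _ hadj, hSu _ hadj, hSv _ hadj, hSz₁ _ hadj]
    by_cases h2 : w₂ ∈ S
    · rw [memS] at h2
      rcases h2 with rfl | rfl | rfl | rfl | rfl | rfl
      exacts [(hSx _ hadj.symm).symm, (hSy _ hadj.symm).symm, (hSz _ hadj.symm).symm,
        (hSu _ hadj.symm).symm, (hSv _ hadj.symm).symm, (hSz₁ _ hadj.symm).symm]
    · rw [hψout _ h1, hψout _ h2]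
      exact hredne _ _ h1 h2 (G.ne_of_adj hadj) (Or.inl hadj)
  · -- the PCF condition
    intro w
    by_cases hw : w ∈ S
    · rw [memS] at hw
      rcases hw with rfl | rfl | rfl | rfl | rfl | rfl
      · -- w = x : neighborhood {y, v, x₁} is rainbow
        refine pcf_at_of_two G ψ _ (two_le_unique G ψ _ y v dyv hxy hvx.symm ?_ ?_)
        · intro m hm hne
          have : m ∈ ({y, v, x₁} : Set V) := NX ▸ hm
          rcases this with rfl | rfl | rfl
          · exact absurd rfl hne
          · rw [hψv, hψy]; exact hVY
          · rw [hψout _ hx₁S, hψy]; exact Ne.symm hYx₁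
        · intro m hm hne
          have : m ∈ ({y, v, x₁} : Set V) := NX ▸ hm
          rcases this with rfl | rfl | rfl
          · rw [hψy, hψv]; exact Ne.symm hVY
          · exact absurd rfl hne
          · rw [hψout _ hx₁S, hψv]; exact Ne.symm hVx₁
      · -- w = y : neighborhood {x, z, a₂, b₂}
        refine pcf_at_of_two G ψ _ ?_
        by_cases hXZ : X = Z
        · refine two_le_unique G ψ _ a₂ b₂ dab hya hyb ?_ ?_
          · intro m hm hne
            have : m ∈ ({x, z, a₂, b₂} : Set V) := NY ▸ hm
            rcases this with rfl | rfl | rfl | rfl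
            · rw [hψx, hψout _ ha₂S, hXZ]; exact hZa
            · rw [hψz, hψout _ ha₂S]; exact hZa
            · exact absurd rfl hne
            · rw [hψout _ hb₂S, hψout _ ha₂S]; exact Ne.symm φab
          · intro m hm hne
            have : m ∈ ({x, z, a₂, b₂} : Set V) := NY ▸ hm
            rcases this with rfl | rfl | rfl | rfl
            · rw [hψx, hψout _ hb₂S, hXZ]; exact hZb
            · rw [hψz, hψout _ hb₂S]; exact hZb
            · rw [hψout _ ha₂S, hψout _ hb₂S]; exact φab
            · exact absurd rfl hne
        by_cases hXa : X = φ a₂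
        · refine two_le_unique G ψ _ z b₂ (Ne.symm hbx.2) hyz hyb ?_ ?_
          · intro m hm hne
            have : m ∈ ({x, z, a₂, b₂} : Set V) := NY ▸ hm
            rcases this with rfl | rfl | rfl | rfl
            · rw [hψx, hψz]; exact hXZ
            · exact absurd rfl hne
            · rw [hψout _ ha₂S, hψz]; exact Ne.symm hZa
            · rw [hψout _ hb₂S, hψz]; exact Ne.symm hZb
          · intro m hm hne
            have : m ∈ ({x, z, a₂, b₂} : Set V) := NY ▸ hm
            rcases this with rfl | rfl | rfl | rfl
            · rw [hψx, hψout _ hb₂S, hXa]; exact φab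
            · rw [hψz, hψout _ hb₂S]; exact hZb
            · rw [hψout _ ha₂S, hψout _ hb₂S]; exact φab
            · exact absurd rfl hne
        by_cases hXb : X = φ b₂
        · refine two_le_unique G ψ _ z a₂ (Ne.symm hax.2) hyz hya ?_ ?_
          · intro m hm hne
            have : m ∈ ({x, z, a₂, b₂} : Set V) := NY ▸ hm
            rcases this with rfl | rfl | rfl | rfl
            · rw [hψx, hψz]; exact hXZ
            · exact absurd rfl hne
            · rw [hψout _ ha₂S, hψz]; exact Ne.symm hZa
            · rw [hψout _ hb₂S, hψz]; exact Ne.symm hZb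
          · intro m hm hne
            have : m ∈ ({x, z, a₂, b₂} : Set V) := NY ▸ hm
            rcases this with rfl | rfl | rfl | rfl
            · rw [hψx, hψout _ ha₂S, hXb]; exact Ne.symm φab
            · rw [hψz, hψout _ ha₂S]; exact hZa
            · exact absurd rfl hne
            · rw [hψout _ hb₂S, hψout _ ha₂S]; exact Ne.symm φab
        · refine two_le_unique G ψ _ x z dxz hxy.symm hyz ?_ ?_
          · intro m hm hne
            have : m ∈ ({x, z, a₂, b₂} : Set V) := NY ▸ hm
            rcases this with rfl | rfl | rfl | rfl
            · exact absurd rfl hne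
            · rw [hψz, hψx]; exact Ne.symm hXZ
            · rw [hψout _ ha₂S, hψx]; exact fun hh => hXa hh.symm
            · rw [hψout _ hb₂S, hψx]; exact fun hh => hXb hh.symm
          · intro m hm hne
            have : m ∈ ({x, z, a₂, b₂} : Set V) := NY ▸ hm
            rcases this with rfl | rfl | rfl | rfl
            · rw [hψx, hψz]; exact hXZ
            · exact absurd rfl hne
            · rw [hψout _ ha₂S, hψz]; exact Ne.symm hZa
            · rw [hψout _ hb₂S, hψz]; exact Ne.symm hZb
      · -- w = z : neighborhood {y, u, z₁} is rainbow
        refine pcf_at_of_two G ψ _ (two_le_unique G ψ _ y u dyu hyz.symm hzu ?_ ?_)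
        · intro m hm hne
          have : m ∈ ({y, u, z₁} : Set V) := NZ ▸ hm
          rcases this with rfl | rfl | rfl
          · exact absurd rfl hne
          · rw [hψu, hψy]; exact Ne.symm hYU
          · rw [hψz₁, hψy]; exact Ne.symm hYW
        · intro m hm hne
          have : m ∈ ({y, u, z₁} : Set V) := NZ ▸ hm
          rcases this with rfl | rfl | rfl
          · rw [hψy, hψu]; exact hYU
          · exact absurd rfl hne
          · rw [hψz₁, hψu]; exact Ne.symm hUW
      · -- w = u : neighborhood {z, v, c₂, d₂}
        refine pcf_at_of_two G ψ _ ?_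
        by_cases hZc : Z = φ c₂
        · obtain ⟨hb1, hb2⟩ := hVburden (Or.inl hZc)
          refine two_le_unique G ψ _ v d₂ (Ne.symm hdz'.2) huv hud ?_ ?_
          · intro m hm hne
            have : m ∈ ({z, v, c₂, d₂} : Set V) := NU ▸ hm
            rcases this with rfl | rfl | rfl | rfl
            · rw [hψz, hψv, hZc]; exact Ne.symm hb1
            · exact absurd rfl hne
            · rw [hψout _ hc₂S, hψv]; exact Ne.symm hb1
            · rw [hψout _ hd₂S, hψv]; exact Ne.symm hb2
          · intro m hm hne
            have : m ∈ ({z, v, c₂, d₂} : Set V) := NU ▸ hm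
            rcases this with rfl | rfl | rfl | rfl
            · rw [hψz, hψout _ hd₂S, hZc]; exact φcd
            · rw [hψv, hψout _ hd₂S]; exact hb2
            · rw [hψout _ hc₂S, hψout _ hd₂S]; exact φcd
            · exact absurd rfl hne
        by_cases hZd : Z = φ d₂
        · obtain ⟨hb1, hb2⟩ := hVburden (Or.inr hZd)
          refine two_le_unique G ψ _ v c₂ (Ne.symm hcz.2) huv huc ?_ ?_
          · intro m hm hne
            have : m ∈ ({z, v, c₂, d₂} : Set V) := NU ▸ hm
            rcases this with rfl | rfl | rfl | rfl
            · rw [hψz, hψv, hZd]; exact Ne.symm hb2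
            · exact absurd rfl hne
            · rw [hψout _ hc₂S, hψv]; exact Ne.symm hb1
            · rw [hψout _ hd₂S, hψv]; exact Ne.symm hb2
          · intro m hm hne
            have : m ∈ ({z, v, c₂, d₂} : Set V) := NU ▸ hm
            rcases this with rfl | rfl | rfl | rfl
            · rw [hψz, hψout _ hc₂S, hZd]; exact Ne.symm φcd
            · rw [hψv, hψout _ hc₂S]; exact hb1
            · exact absurd rfl hne
            · rw [hψout _ hd₂S, hψout _ hc₂S]; exact Ne.symm φcd
        by_cases hVZ : VV = Z
        · refine two_le_unique G ψ _ c₂ d₂ dcd huc hud ?_ ?_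
          · intro m hm hne
            have : m ∈ ({z, v, c₂, d₂} : Set V) := NU ▸ hm
            rcases this with rfl | rfl | rfl | rfl
            · rw [hψz, hψout _ hc₂S]; exact hZc
            · rw [hψv, hψout _ hc₂S, hVZ]; exact hZc
            · exact absurd rfl hne
            · rw [hψout _ hd₂S, hψout _ hc₂S]; exact Ne.symm φcd
          · intro m hm hne
            have : m ∈ ({z, v, c₂, d₂} : Set V) := NU ▸ hm
            rcases this with rfl | rfl | rfl | rfl
            · rw [hψz, hψout _ hd₂S]; exact hZd
            · rw [hψv, hψout _ hd₂S, hVZ]; exact hZd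
            · rw [hψout _ hc₂S, hψout _ hd₂S]; exact φcd
            · exact absurd rfl hne
        by_cases hVc : VV = φ c₂
        · refine two_le_unique G ψ _ z d₂ (Ne.symm hdz'.1) hzu.symm hud ?_ ?_
          · intro m hm hne
            have : m ∈ ({z, v, c₂, d₂} : Set V) := NU ▸ hm
            rcases this with rfl | rfl | rfl | rfl
            · exact absurd rfl hne
            · rw [hψv, hψz]; exact hVZ
            · rw [hψout _ hc₂S, hψz]; exact Ne.symm hZc
            · rw [hψout _ hd₂S, hψz]; exact Ne.symm hZd
          · intro m hm hne
            have : m ∈ ({z, v, c₂, d₂} : Set V) := NU ▸ hm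
            rcases this with rfl | rfl | rfl | rfl
            · rw [hψz, hψout _ hd₂S]; exact hZd
            · rw [hψv, hψout _ hd₂S, hVc]; exact φcd
            · rw [hψout _ hc₂S, hψout _ hd₂S]; exact φcd
            · exact absurd rfl hne
        by_cases hVd : VV = φ d₂
        · refine two_le_unique G ψ _ z c₂ (Ne.symm hcz.1) hzu.symm huc ?_ ?_
          · intro m hm hne
            have : m ∈ ({z, v, c₂, d₂} : Set V) := NU ▸ hm
            rcases this with rfl | rfl | rfl | rfl
            · exact absurd rfl hne
            · rw [hψv, hψz]; exact hVZ
            · rw [hψout _ hc₂S, hψz]; exact Ne.symm hZc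
            · rw [hψout _ hd₂S, hψz]; exact Ne.symm hZd
          · intro m hm hne
            have : m ∈ ({z, v, c₂, d₂} : Set V) := NU ▸ hm
            rcases this with rfl | rfl | rfl | rfl
            · rw [hψz, hψout _ hc₂S]; exact hZc
            · rw [hψv, hψout _ hc₂S, hVd]; exact Ne.symm φcd
            · exact absurd rfl hne
            · rw [hψout _ hd₂S, hψout _ hc₂S]; exact Ne.symm φcd
        · refine two_le_unique G ψ _ z v dzv hzu.symm huv ?_ ?_
          · intro m hm hne
            have : m ∈ ({z, v, c₂, d₂} : Set V) := NU ▸ hm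
            rcases this with rfl | rfl | rfl | rfl
            · exact absurd rfl hne
            · rw [hψv, hψz]; exact hVZ
            · rw [hψout _ hc₂S, hψz]; exact Ne.symm hZc
            · rw [hψout _ hd₂S, hψz]; exact Ne.symm hZd
          · intro m hm hne
            have : m ∈ ({z, v, c₂, d₂} : Set V) := NU ▸ hm
            rcases this with rfl | rfl | rfl | rfl
            · rw [hψz, hψv]; exact Ne.symm hVZ
            · exact absurd rfl hne
            · rw [hψout _ hc₂S, hψv]; exact fun hh => hVc hh.symm
            · rw [hψout _ hd₂S, hψv]; exact fun hh => hVd hh.symm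
      · -- w = v : neighborhood {u, x, v₁} is rainbow
        refine pcf_at_of_two G ψ _ (two_le_unique G ψ _ u x (Ne.symm dxu) huv.symm hvx ?_ ?_)
        · intro m hm hne
          have : m ∈ ({u, x, v₁} : Set V) := NV ▸ hm
          rcases this with rfl | rfl | rfl
          · exact absurd rfl hne
          · rw [hψx, hψu]; exact hXU
          · rw [hψout _ hv₁S, hψu]; exact Ne.symm hUv₁
        · intro m hm hne
          have : m ∈ ({u, x, v₁} : Set V) := NV ▸ hm
          rcases this with rfl | rfl | rfl
          · rw [hψu, hψx]; exact Ne.symm hXU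
          · exact absurd rfl hne
          · rw [hψout _ hv₁S, hψx]; exact Ne.symm hXv₁
      · -- w = z₁ : neighborhood {z, p₂, q₂} is rainbow
        refine pcf_at_of_two G ψ _ (two_le_unique G ψ _ z p₂ (Ne.symm hpz) hzz₁.symm hz₁p ?_ ?_)
        · intro m hm hne
          have : m ∈ ({z, p₂, q₂} : Set V) := NZ₁ ▸ hm
          rcases this with rfl | rfl | rfl
          · exact absurd rfl hne
          · rw [hψout _ hp₂S, hψz]; exact Ne.symm hZp
          · rw [hψout _ hq₂S, hψz]; exact Ne.symm hZq
        · intro m hm hne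
          have : m ∈ ({z, p₂, q₂} : Set V) := NZ₁ ▸ hm
          rcases this with rfl | rfl | rfl
          · rw [hψz, hψout _ hp₂S]; exact hZp
          · exact absurd rfl hne
          · rw [hψout _ hq₂S, hψout _ hp₂S]; exact Ne.symm φpq
    · -- w outside S
      by_cases hTw : ∀ s, s ∈ S → ¬G.Adj w s
      · -- no neighbor in S : the neighborhood and its colors agree with those in G*S
        have hNeq : {m | G.Adj w m} = {m | (G.reduce S).Adj w m} := by
          ext m
          constructor
          · intro hm
            have hmS : m ∉ S := fun hmS => hTw m hmS hm
            exact ⟨hw, hmS, G.ne_of_adj hm, Or.inl hm⟩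
          · rintro ⟨-, hmS, hne, (hadj | ⟨s, hsS, h1, h2⟩)⟩
            · exact hadj
            · exact absurd h1 (hTw s hsS)
        have hueq : {c : Fin 9 | {m | G.Adj w m ∧ ψ m = c}.ncard = 1} =
            {c : Fin 9 | {m | (G.reduce S).Adj w m ∧ φ m = c}.ncard = 1} := by
          ext c
          have hseq : {m | G.Adj w m ∧ ψ m = c} = {m | (G.reduce S).Adj w m ∧ φ m = c} := by
            ext m
            constructor
            · rintro ⟨hm, he⟩
              have hmS : m ∉ S := fun hmS => hTw m hmS hm
              refine ⟨⟨hw, hmS, G.ne_of_adj hm, Or.inl hm⟩, ?_⟩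
              rw [← hψout m hmS]; exact he
            · rintro ⟨hm, he⟩
              have hm' : G.Adj w m := by
                have : m ∈ {m | G.Adj w m} := by rw [hNeq]; exact hm
                exact this
              have hmS : m ∉ S := fun hmS => hTw m hmS hm'
              exact ⟨hm', by rw [hψout m hmS]; exact he⟩
          simp only [Set.mem_setOf_eq, hseq]
        rw [hNeq, hueq]
        exact hpcf w
      · -- w has a neighbor in S
        push_neg at hTw
        -- helper : colors not in AS are not in cs when cs is small
        have hAScs : ∀ (w' : V) (c : Fin 9), (cs w').ncard ≤ 2 → c ∉ AS w' → c ∉ cs w' :=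
          fun w' c hle hc => by rwa [hASeq w' hle] at hc
        have hNole2 : ∀ (w' t₁ t₂ : V), t₁ ∈ S → t₂ ∈ S → t₁ ≠ t₂ → G.Adj w' t₁ →
            G.Adj w' t₂ → (No w').ncard ≤ 2 := by
          intro w' t₁ t₂ ht₁ ht₂ htt h1 h2
          have e2 : No w' ⊆ {m | G.Adj w' m} \ {t₁, t₂} := by
            rintro m ⟨hm1, hm2⟩
            exact ⟨hm1, by rintro (rfl | rfl); exacts [hm2 ht₁, hm2 ht₂]⟩
          have e3 : ({t₁, t₂} : Set V) ⊆ {m | G.Adj w' m} := by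
            rintro m (rfl | rfl); exacts [h1, h2]
          have e4 : ({m | G.Adj w' m} \ {t₁, t₂}).ncard = {m | G.Adj w' m}.ncard - 2 := by
            rw [Set.ncard_diff e3 (Set.toFinite _), Set.ncard_pair htt]
          have e5 := hΔ w'
          have e6 := Set.ncard_le_ncard e2 (Set.toFinite _)
          omega
        have hNole1 : ∀ (w' t₁ t₂ t₃ : V), t₁ ∈ S → t₂ ∈ S → t₃ ∈ S → t₁ ≠ t₂ → t₁ ≠ t₃ →
            t₂ ≠ t₃ → G.Adj w' t₁ → G.Adj w' t₂ → G.Adj w' t₃ → (No w').ncard ≤ 1 := by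
          intro w' t₁ t₂ t₃ ht₁ ht₂ ht₃ h12 h13 h23 e1 e2 e3
          have f2 : No w' ⊆ {m | G.Adj w' m} \ {t₁, t₂, t₃} := by
            rintro m ⟨hm1, hm2⟩
            exact ⟨hm1, by rintro (rfl | rfl | rfl); exacts [hm2 ht₁, hm2 ht₂, hm2 ht₃]⟩
          have f3 : ({t₁, t₂, t₃} : Set V) ⊆ {m | G.Adj w' m} := by
            rintro m (rfl | rfl | rfl); exacts [e1, e2, e3]
          have f4 : ({m | G.Adj w' m} \ {t₁, t₂, t₃}).ncard = {m | G.Adj w' m}.ncard - 3 := by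
            rw [Set.ncard_diff f3 (Set.toFinite _),
          Set.ncard_eq_three.mpr ⟨t₁, t₂, t₃, h12, h13, h23, rfl⟩]
          have f5 := hΔ w'
          have f6 := Set.ncard_le_ncard f2 (Set.toFinite _)
          omega
        -- generic verification when w has ≥ 2 neighbors in S
        have GENA : ∀ (w' t₁ t₂ : V), w' ∉ S → G.Adj w' t₁ → G.Adj w' t₂ → t₁ ≠ t₂ →
            ψ t₁ ≠ ψ t₂ → ψ t₁ ∉ cs w' → ψ t₂ ∉ cs w' →
            (∀ m, G.Adj w' m → m ∈ S → m = t₁ ∨ m = t₂ ∨ (ψ m ≠ ψ t₁ ∧ ψ m ≠ ψ t₂)) →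
            min 2 {m | G.Adj w' m}.ncard ≤
              {c : Fin 9 | {m | G.Adj w' m ∧ ψ m = c}.ncard = 1}.ncard := by
          intro w' t₁ t₂ hw'S ha1 ha2 htt hcc hc1 hc2 hcl
          refine le_trans (min_le_left _ _) (two_le_unique G ψ w' t₁ t₂ htt ha1 ha2 ?_ ?_)
          · intro m hm hne
            by_cases hmS : m ∈ S
            · rcases hcl m hm hmS with rfl | rfl | hcl'
              · exact absurd rfl hne
              · exact Ne.symm hcc
              · exact hcl'.1
            · rw [hψout m hmS]
              intro hh
              exact hc1 (hh ▸ ⟨m, ⟨hm, hmS⟩, rfl⟩)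
          · intro m hm hne
            by_cases hmS : m ∈ S
            · rcases hcl m hm hmS with rfl | rfl | hcl'
              · exact hcc
              · exact absurd rfl hne
              · exact hcl'.2
            · rw [hψout m hmS]
              intro hh
              exact hc2 (hh ▸ ⟨m, ⟨hm, hmS⟩, rfl⟩)
        -- monochromatic outside neighborhoods are impossible (with a reduce-partner)
        have PART : ∀ (w' w'' t : V), w' ∉ S → w'' ∉ S → w'' ≠ w' → t ∈ S → G.Adj w' t →
            G.Adj t w'' → ¬G.Adj w' w'' → (∀ m, G.Adj w' m → m ∈ S → m = t) →
            (∀ m, G.Adj t m → m ∉ S → m = w' ∨ m = w'') →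
            ∀ γ : Fin 9, (∀ n, G.Adj w' n → n ∉ S → φ n = γ) → 2 ≤ (No w').ncard → False := by
          intro w' w'' t hw'S hw''S hne htS hat hatw hnadj hcl hclt γ hγ h2
          have hstar : {m | (G.reduce S).Adj w' m} = insert w'' (No w') := by
            ext m
            constructor
            · rintro ⟨-, hmS, hnem, (hadj | ⟨s, hsS, h1, h2'⟩)⟩
              · exact Set.mem_insert_of_mem _ ⟨hadj, hmS⟩
              · have hst : s = t := hcl s h1 hsS
                subst hst
                rcases hclt m h2' hmS with rfl | rfl
                · exact absurd rfl hnem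
                · exact Set.mem_insert _ _
            · rintro (rfl | hm)
              · exact ⟨hw'S, hw''S, Ne.symm hne, Or.inr ⟨t, htS, hat, hatw⟩⟩
              · exact ⟨hw'S, hm.2, G.ne_of_adj hm.1, Or.inl hm.1⟩
          have hsub : {c : Fin 9 | {m | (G.reduce S).Adj w' m ∧ φ m = c}.ncard = 1} ⊆
              {φ w''} := by
            intro c hc
            simp only [Set.mem_setOf_eq] at hc
            by_contra hcne
            obtain ⟨m₀, hm₀⟩ := Set.ncard_eq_one.mp hc
            have hm₀m : m₀ ∈ {m | (G.reduce S).Adj w' m ∧ φ m = c} := by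
              rw [hm₀]; rfl
            have hm₀N : m₀ ∈ insert w'' (No w') := by rw [← hstar]; exact hm₀m.1
            have hcγ : c = γ := by
              rcases hm₀N with rfl | hm₀'
              · exact absurd (hm₀m.2.symm) (by simpa using hcne)
              · rw [← hm₀m.2, hγ m₀ hm₀'.1 hm₀'.2]
            obtain ⟨n₁, hn₁, n₂, hn₂, hnn⟩ := (Set.one_lt_ncard (Set.toFinite _)).mp
              (by omega : 1 < (No w').ncard)
            have e1 : n₁ ∈ {m | (G.reduce S).Adj w' m ∧ φ m = c} := by
              refine ⟨?_, by rw [hγ n₁ hn₁.1 hn₁.2, hcγ]⟩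
              have : n₁ ∈ insert w'' (No w') := Set.mem_insert_of_mem _ hn₁
              rw [← hstar] at this; exact this
            have e2 : n₂ ∈ {m | (G.reduce S).Adj w' m ∧ φ m = c} := by
              refine ⟨?_, by rw [hγ n₂ hn₂.1 hn₂.2, hcγ]⟩
              have : n₂ ∈ insert w'' (No w') := Set.mem_insert_of_mem _ hn₂
              rw [← hstar] at this; exact this
            exact ncard_ne_one_of_two _ n₁ n₂ e1 e2 hnn hc
          have h3 : 2 ≤ {m | (G.reduce S).Adj w' m}.ncard := by
            have : No w' ⊆ {m | (G.reduce S).Adj w' m} := by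
              rw [hstar]; exact Set.subset_insert _ _
            exact le_trans h2 (Set.ncard_le_ncard this (Set.toFinite _))
          have h4 := hpcf w'
          rw [min_eq_left h3] at h4
          have h5 : ({c : Fin 9 | {m | (G.reduce S).Adj w' m ∧ φ m = c}.ncard = 1}).ncard ≤ 1 :=
            le_trans (Set.ncard_le_ncard hsub (Set.toFinite _)) (by simp)
          omega
        -- monochromatic outside neighborhoods are impossible (no partner)
        have NOPART : ∀ (w' t : V), w' ∉ S → t ∈ S → G.Adj w' t →
            (∀ m, G.Adj w' m → m ∈ S → m = t) →
            (∀ m, G.Adj t m → m ∉ S → m = w') →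
            ∀ γ : Fin 9, (∀ n, G.Adj w' n → n ∉ S → φ n = γ) → 2 ≤ (No w').ncard → False := by
          intro w' t hw'S htS hat hcl hclt γ hγ h2
          have hstar : {m | (G.reduce S).Adj w' m} = No w' := by
            ext m
            constructor
            · rintro ⟨-, hmS, hnem, (hadj | ⟨s, hsS, h1, h2'⟩)⟩
              · exact ⟨hadj, hmS⟩
              · have hst : s = t := hcl s h1 hsS
                subst hst
                rcases hclt m h2' hmS with rfl
                exact absurd rfl hnem
            · rintro hm
              exact ⟨hw'S, hm.2, G.ne_of_adj hm.1, Or.inl hm.1⟩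
          have hsub : {c : Fin 9 | {m | (G.reduce S).Adj w' m ∧ φ m = c}.ncard = 1} ⊆
              (∅ : Set (Fin 9)) := by
            intro c hc
            simp only [Set.mem_setOf_eq] at hc
            obtain ⟨m₀, hm₀⟩ := Set.ncard_eq_one.mp hc
            have hm₀m : m₀ ∈ {m | (G.reduce S).Adj w' m ∧ φ m = c} := by
              rw [hm₀]; rfl
            have hm₀N : m₀ ∈ No w' := by rw [← hstar]; exact hm₀m.1
            have hcγ : c = γ := by rw [← hm₀m.2, hγ m₀ hm₀N.1 hm₀N.2]
            obtain ⟨n₁, hn₁, n₂, hn₂, hnn⟩ := (Set.one_lt_ncard (Set.toFinite _)).mp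
              (by omega : 1 < (No w').ncard)
            have e1 : n₁ ∈ {m | (G.reduce S).Adj w' m ∧ φ m = c} := by
              refine ⟨?_, by rw [hγ n₁ hn₁.1 hn₁.2, hcγ]⟩
              have : n₁ ∈ {m | (G.reduce S).Adj w' m} := by rw [hstar]; exact hn₁
              exact this
            have e2 : n₂ ∈ {m | (G.reduce S).Adj w' m ∧ φ m = c} := by
              refine ⟨?_, by rw [hγ n₂ hn₂.1 hn₂.2, hcγ]⟩
              have : n₂ ∈ {m | (G.reduce S).Adj w' m} := by rw [hstar]; exact hn₂
              exact this
            exact absurd hc (ncard_ne_one_of_two _ n₁ n₂ e1 e2 hnn)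
          have h3 : 2 ≤ {m | (G.reduce S).Adj w' m}.ncard := by
            rw [hstar]; exact h2
          have h4 := hpcf w'
          rw [min_eq_left h3] at h4
          have h5 : ({c : Fin 9 | {m | (G.reduce S).Adj w' m ∧ φ m = c}.ncard = 1}).ncard ≤ 1 :=
            le_trans (Set.ncard_le_ncard hsub (Set.toFinite _)) (by simp)
          omega
        -- generic verification when w has exactly one neighbor in S
        have SINGLE : ∀ (w' t : V), w' ∉ S → t ∈ S → G.Adj w' t → ψ t ∉ AS w' →
            (∀ m, G.Adj w' m → m ∈ S → m = t) →
            (∀ γ : Fin 9, (∀ n, G.Adj w' n → n ∉ S → φ n = γ) → 2 ≤ (No w').ncard → False) →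
            min 2 {m | G.Adj w' m}.ncard ≤
              {c : Fin 9 | {m | G.Adj w' m ∧ ψ m = c}.ncard = 1}.ncard := by
          intro w' t hw'S htS hadj hASt hclass hpart
          have htNo : t ∉ No w' := fun hh => hh.2 htS
          have hNdec : {m | G.Adj w' m} = insert t (No w') := by
            ext m
            constructor
            · intro hm
              by_cases hmS : m ∈ S
              · rw [hclass m hm hmS]; exact Set.mem_insert _ _
              · exact Set.mem_insert_of_mem _ ⟨hm, hmS⟩
            · rintro (rfl | hm)
              · exact hadj
              · exact hm.1
          have hNcard : {m | G.Adj w' m}.ncard = (No w').ncard + 1 := by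
            rw [hNdec, Set.ncard_insert_of_notMem htNo (Set.toFinite _)]
          have hkle : (No w').ncard ≤ 3 := by have := hΔ w'; omega
          have hcsim : (cs w').ncard ≤ (No w').ncard := by
            rw [hcsd]; exact Set.ncard_image_le (Set.toFinite _)
          have hmemcase : ∀ m, G.Adj w' m → m = t ∨ m ∈ No w' := by
            intro m hm
            by_cases hmS : m ∈ S
            · exact Or.inl (hclass m hm hmS)
            · exact Or.inr ⟨hm, hmS⟩
          have hfresht : ψ t ∉ cs w' → ∀ m, G.Adj w' m → m ≠ t → ψ m ≠ ψ t := by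
            intro hcs m hm hne
            rcases hmemcase m hm with rfl | hmNo
            · exact absurd rfl hne
            · rw [hψout m hmNo.2]
              intro hh
              exact hcs (hh ▸ ⟨m, hmNo, rfl⟩)
          have hk : (No w').ncard = 0 ∨ (No w').ncard = 1 ∨ (No w').ncard = 2 ∨
              (No w').ncard = 3 := by omega
          rcases hk with hk | hk | hk | hk
          · -- k = 0 : degree 1
            have hNo0 : No w' = ∅ := (Set.ncard_eq_zero (Set.toFinite _)).mp hk
            have hfr : ∀ m, G.Adj w' m → m ≠ t → ψ m ≠ ψ t := by
              intro m hm hne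
              exfalso
              rcases hmemcase m hm with rfl | hmNo
              · exact hne rfl
              · rw [hNo0] at hmNo; exact hmNo
            have hmem := fresh_mem G ψ w' t hadj hfr
            have hpos : 0 < {c : Fin 9 | {m | G.Adj w' m ∧ ψ m = c}.ncard = 1}.ncard :=
              (Set.ncard_pos (Set.toFinite _)).mpr ⟨ψ t, hmem⟩
            have e1 : {m | G.Adj w' m}.ncard = 1 := by rw [hNcard, hk]
            rw [e1]
            have e2 : min 2 1 = 1 := by norm_num
            rw [e2]
            omega
          · -- k = 1
            obtain ⟨n, hNo1⟩ := Set.ncard_eq_one.mp hk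
            have hnNo : n ∈ No w' := by rw [hNo1]; rfl
            have hcs1 : ψ t ∉ cs w' := hAScs w' _ (by omega) hASt
            have htn : t ≠ n := fun hh => hnNo.2 (hh ▸ htS)
            refine le_trans (min_le_left _ _)
              (two_le_unique G ψ w' t n htn hadj hnNo.1 (hfresht hcs1) ?_)
            intro m hm hne
            rcases hmemcase m hm with rfl | hmNo
            · rw [hψout n hnNo.2]
              intro hh
              exact hcs1 (hh ▸ ⟨n, hnNo, rfl⟩)
            · rw [hNo1] at hmNo
              exact absurd hmNo hne
          · -- k = 2
            obtain ⟨n₁, n₂, hne12, hNo2⟩ := Set.ncard_eq_two.mp hk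
            have hn₁ : n₁ ∈ No w' := by rw [hNo2]; exact Or.inl rfl
            have hn₂ : n₂ ∈ No w' := by rw [hNo2]; exact Or.inr rfl
            by_cases h12 : φ n₁ = φ n₂
            · exfalso
              refine hpart (φ n₁) ?_ (by omega)
              intro n hna hnS
              have : n ∈ No w' := ⟨hna, hnS⟩
              rw [hNo2] at this
              rcases this with rfl | rfl
              · rfl
              · exact h12.symm
            · have hcs2 : ψ t ∉ cs w' := hAScs w' _ (by omega) hASt
              refine le_trans (min_le_left _ _)
                (two_le_unique G ψ w' n₁ n₂ hne12 hn₁.1 hn₂.1 ?_ ?_)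
              · intro m hm hne
                rcases hmemcase m hm with rfl | hmNo
                · rw [hψout n₁ hn₁.2]
                  intro hh
                  exact hcs2 (hh ▸ ⟨n₁, hn₁, rfl⟩)
                · rw [hNo2] at hmNo
                  rcases hmNo with rfl | rfl
                  · exact absurd rfl hne
                  · rw [hψout _ hn₂.2, hψout _ hn₁.2]; exact Ne.symm h12
              · intro m hm hne
                rcases hmemcase m hm with rfl | hmNo
                · rw [hψout n₂ hn₂.2]
                  intro hh
                  exact hcs2 (hh ▸ ⟨n₂, hn₂, rfl⟩)
                · rw [hNo2] at hmNo
                  rcases hmNo with rfl | rfl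
                  · rw [hψout _ hn₁.2, hψout _ hn₂.2]; exact h12
                  · exact absurd rfl hne
          · -- k = 3
            obtain ⟨n₁, n₂, n₃, hv12, hv13, hv23, hNo3⟩ := Set.ncard_eq_three.mp hk
            have hn₁ : n₁ ∈ No w' := by rw [hNo3]; exact Or.inl rfl
            have hn₂ : n₂ ∈ No w' := by rw [hNo3]; exact Or.inr (Or.inl rfl)
            have hn₃ : n₃ ∈ No w' := by rw [hNo3]; exact Or.inr (Or.inr rfl)
            have hcssub : ∀ α β : Fin 9, φ n₁ ∈ ({α, β} : Set (Fin 9)) →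
                φ n₂ ∈ ({α, β} : Set (Fin 9)) → φ n₃ ∈ ({α, β} : Set (Fin 9)) →
                (cs w').ncard ≤ 2 := by
              intro α β e1 e2 e3
              refine ncard_le2 _ α β ?_
              rintro c ⟨n, hn, rfl⟩
              rw [hNo3] at hn
              rcases hn with rfl | rfl | rfl
              exacts [e1, e2, e3]
            -- freshness of an odd outside vertex
            have hodd : ∀ nod na nb : V, nod ∈ No w' → na ∈ No w' → nb ∈ No w' →
                (∀ m, G.Adj w' m → m ≠ nod → m = t ∨ m = na ∨ m = nb) →
                φ na ≠ φ nod → φ nb ≠ φ nod → ψ t ≠ φ nod →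
                ∀ m, G.Adj w' m → m ≠ nod → ψ m ≠ ψ nod := by
              intro nod na nb hnod hna hnb hcl ea eb et m hm hne
              rw [hψout nod hnod.2]
              rcases hcl m hm hne with rfl | rfl | rfl
              · exact et
              · rw [hψout _ hna.2]; exact ea
              · rw [hψout _ hnb.2]; exact eb
            have hclm : ∀ m, G.Adj w' m → m = t ∨ m = n₁ ∨ m = n₂ ∨ m = n₃ := by
              intro m hm
              rcases hmemcase m hm with rfl | hmNo
              · exact Or.inl rfl
              · rw [hNo3] at hmNo
                rcases hmNo with rfl | rfl | rfl
                exacts [Or.inr (Or.inl rfl), Or.inr (Or.inr (Or.inl rfl)),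
                  Or.inr (Or.inr (Or.inr rfl))]
            by_cases h12 : φ n₁ = φ n₂
            · by_cases h13 : φ n₁ = φ n₃
              · exfalso
                refine hpart (φ n₁) ?_ (by omega)
                intro n hna hnS
                have : n ∈ No w' := ⟨hna, hnS⟩
                rw [hNo3] at this
                rcases this with rfl | rfl | rfl
                exacts [rfl, h12.symm, h13.symm]
              · -- pattern a a b : fresh pair t, n₃
                have hcs2 : ψ t ∉ cs w' :=
                  hAScs w' _ (hcssub (φ n₁) (φ n₃) (Or.inl rfl) (Or.inl h12.symm)
                    (Or.inr rfl)) hASt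
                have hψtn₃ : ψ t ≠ φ n₃ := fun hh => hcs2 (hh ▸ ⟨n₃, hn₃, rfl⟩)
                have htn₃ : t ≠ n₃ := fun hh => hn₃.2 (hh ▸ htS)
                refine le_trans (min_le_left _ _)
                  (two_le_unique G ψ w' t n₃ htn₃ hadj hn₃.1 (hfresht hcs2) ?_)
                refine hodd n₃ n₁ n₂ hn₃ hn₁ hn₂ ?_ h13 (h12 ▸ h13) hψtn₃
                intro m hm hne
                rcases hclm m hm with rfl | rfl | rfl | rfl
                · exact Or.inl rfl
                · exact Or.inr (Or.inl rfl)
                · exact Or.inr (Or.inr rfl)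
                · exact absurd rfl hne
            · by_cases h13 : φ n₁ = φ n₃
              · -- pattern a b a : fresh pair t, n₂
                have hcs2 : ψ t ∉ cs w' :=
                  hAScs w' _ (hcssub (φ n₁) (φ n₂) (Or.inl rfl) (Or.inr rfl)
                    (Or.inl h13.symm)) hASt
                have hψtn₂ : ψ t ≠ φ n₂ := fun hh => hcs2 (hh ▸ ⟨n₂, hn₂, rfl⟩)
                have htn₂ : t ≠ n₂ := fun hh => hn₂.2 (hh ▸ htS)
                refine le_trans (min_le_left _ _)
                  (two_le_unique G ψ w' t n₂ htn₂ hadj hn₂.1 (hfresht hcs2) ?_)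
                refine hodd n₂ n₁ n₃ hn₂ hn₁ hn₃ ?_ h12 (fun hh => h12 (h13.trans hh)) hψtn₂
                intro m hm hne
                rcases hclm m hm with rfl | rfl | rfl | rfl
                · exact Or.inl rfl
                · exact Or.inr (Or.inl rfl)
                · exact absurd rfl hne
                · exact Or.inr (Or.inr rfl)
              · by_cases h23 : φ n₂ = φ n₃
                · -- pattern b a a : fresh pair t, n₁
                  have hcs2 : ψ t ∉ cs w' :=
                    hAScs w' _ (hcssub (φ n₁) (φ n₂) (Or.inl rfl) (Or.inr rfl)
                      (Or.inr h23.symm)) hASt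
                  have hψtn₁ : ψ t ≠ φ n₁ := fun hh => hcs2 (hh ▸ ⟨n₁, hn₁, rfl⟩)
                  have htn₁ : t ≠ n₁ := fun hh => hn₁.2 (hh ▸ htS)
                  refine le_trans (min_le_left _ _)
                    (two_le_unique G ψ w' t n₁ htn₁ hadj hn₁.1 (hfresht hcs2) ?_)
                  refine hodd n₁ n₂ n₃ hn₁ hn₂ hn₃ ?_ (Ne.symm h12) (fun hh => h13 hh.symm) hψtn₁
                  intro m hm hne
                  rcases hclm m hm with rfl | rfl | rfl | rfl
                  · exact Or.inl rfl
                  · exact absurd rfl hne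
                  · exact Or.inr (Or.inl rfl)
                  · exact Or.inr (Or.inr rfl)
                · -- all three outside colors distinct
                  have hfr : ∀ ni nj nk : V, ni ∈ No w' → nj ∈ No w' → nk ∈ No w' →
                      (∀ m, G.Adj w' m → m ≠ ni → m = t ∨ m = nj ∨ m = nk) →
                      φ nj ≠ φ ni → φ nk ≠ φ ni → ψ t ≠ φ ni →
                      ∀ m, G.Adj w' m → m ≠ ni → ψ m ≠ ψ ni :=
                    fun ni nj nk e1 e2 e3 e4 e5 e6 e7 => hodd ni nj nk e1 e2 e3 e4 e5 e6 e7
                  by_cases hp1 : ψ t = φ n₁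
                  · -- fresh pair n₂, n₃
                    refine le_trans (min_le_left _ _)
                      (two_le_unique G ψ w' n₂ n₃ hv23 hn₂.1 hn₃.1 ?_ ?_)
                    · refine hfr n₂ n₁ n₃ hn₂ hn₁ hn₃ ?_ h12 (Ne.symm h23) (by rw [hp1]; exact h12)
                      intro m hm hne
                      rcases hclm m hm with rfl | rfl | rfl | rfl
                      exacts [Or.inl rfl, Or.inr (Or.inl rfl), absurd rfl hne,
                        Or.inr (Or.inr rfl)]
                    · refine hfr n₃ n₁ n₂ hn₃ hn₁ hn₂ ?_ h13 h23 (by rw [hp1]; exact h13)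
                      intro m hm hne
                      rcases hclm m hm with rfl | rfl | rfl | rfl
                      exacts [Or.inl rfl, Or.inr (Or.inl rfl), Or.inr (Or.inr rfl),
                        absurd rfl hne]
                  · by_cases hp2 : ψ t = φ n₂
                    · -- fresh pair n₁, n₃
                      refine le_trans (min_le_left _ _)
                        (two_le_unique G ψ w' n₁ n₃ hv13 hn₁.1 hn₃.1 ?_ ?_)
                      · refine hfr n₁ n₂ n₃ hn₁ hn₂ hn₃ ?_ (Ne.symm h12) (Ne.symm h13)
                          (by rw [hp2]; exact Ne.symm h12)
                        intro m hm hne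
                        rcases hclm m hm with rfl | rfl | rfl | rfl
                        exacts [Or.inl rfl, absurd rfl hne, Or.inr (Or.inl rfl),
                          Or.inr (Or.inr rfl)]
                      · refine hfr n₃ n₁ n₂ hn₃ hn₁ hn₂ ?_ h13 h23 (by rw [hp2]; exact h23)
                        intro m hm hne
                        rcases hclm m hm with rfl | rfl | rfl | rfl
                        exacts [Or.inl rfl, Or.inr (Or.inl rfl), Or.inr (Or.inr rfl),
                          absurd rfl hne]
                    · -- fresh pair n₁, n₂
                      refine le_trans (min_le_left _ _)
                        (two_le_unique G ψ w' n₁ n₂ hv12 hn₁.1 hn₂.1 ?_ ?_)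
                      · refine hfr n₁ n₂ n₃ hn₁ hn₂ hn₃ ?_ (Ne.symm h12) (Ne.symm h13) hp1
                        intro m hm hne
                        rcases hclm m hm with rfl | rfl | rfl | rfl
                        exacts [Or.inl rfl, absurd rfl hne, Or.inr (Or.inl rfl),
                          Or.inr (Or.inr rfl)]
                      · refine hfr n₂ n₁ n₃ hn₂ hn₁ hn₃ ?_ h12 (Ne.symm h23) hp2
                        intro m hm hne
                        rcases hclm m hm with rfl | rfl | rfl | rfl
                        exacts [Or.inl rfl, Or.inr (Or.inl rfl), absurd rfl hne,
                          Or.inr (Or.inr rfl)]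
        obtain ⟨s₀, hs₀S, hs₀a⟩ := hTw
        by_cases hBx : G.Adj w x
        · -- w = x₁
          rcases clx w hw hBx with rfl
          have hnwy : ¬G.Adj w y := fun hh => nadj_yx₁ hh.symm
          have hnwv : ¬G.Adj w v := fun hh => nadj_vx₁ hh.symm
          have hnwz : ¬G.Adj w z := fun hh => nadj_zx₁ hh.symm
          by_cases hBu : G.Adj w u
          · rcases clu w hw hBu with rfl | rfl <;>
            · by_cases hBz₁ : G.Adj w z₁
              · -- T = {x, u, z₁}
                refine GENA w x u hw hBx hBu dxu (by rw [hψx, hψu]; exact hXU)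
                  (by rw [hψx];
                      exact hAScs w X (hcsle2 w x u hxS huS dxu hBx hBu) hXAx₁)
                  (by rw [hψu];
                      exact hAScs w U (hcsle2 w x u hxS huS dxu hBx hBu) (by first
                        | exact hUAc | exact hUAd)) ?_
                intro m hm hmS
                rw [memS] at hmS
                rcases hmS with rfl | rfl | rfl | rfl | rfl | rfl
                · exact Or.inl rfl
                · exact absurd hm hnwy
                · exact absurd hm hnwz
                · exact Or.inr (Or.inl rfl)
                · exact absurd hm hnwv
                · refine Or.inr (Or.inr ⟨?_, ?_⟩)
                  · rw [hψz₁, hψx]; exact Ne.symm (hXgate hBz₁)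
                  · rw [hψz₁, hψu]; exact Ne.symm hUW
              · -- T = {x, u}
                refine GENA w x u hw hBx hBu dxu (by rw [hψx, hψu]; exact hXU)
                  (by rw [hψx];
                      exact hAScs w X (hcsle2 w x u hxS huS dxu hBx hBu) hXAx₁)
                  (by rw [hψu];
                      exact hAScs w U (hcsle2 w x u hxS huS dxu hBx hBu) (by first
                        | exact hUAc | exact hUAd)) ?_
                intro m hm hmS
                rw [memS] at hmS
                rcases hmS with rfl | rfl | rfl | rfl | rfl | rfl
                · exact Or.inl rfl
                · exact absurd hm hnwy
                · exact absurd hm hnwz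
                · exact Or.inr (Or.inl rfl)
                · exact absurd hm hnwv
                · exact absurd hm hBz₁
          · by_cases hBz₁ : G.Adj w z₁
            · -- T = {x, z₁}
              rcases clz₁ w hw hBz₁ with rfl | rfl <;>
              · refine GENA w x z₁ hw hBx hBz₁ (Ne.symm nz₁x) (by rw [hψx, hψz₁]; exact hXgate hBz₁)
                  (by rw [hψx];
                      exact hAScs w X (hcsle2 w x z₁ hxS hz₁S (Ne.symm nz₁x) hBx hBz₁) hXAx₁)
                  (by rw [hψz₁];
                      exact hAScs w W (hcsle2 w x z₁ hxS hz₁S (Ne.symm nz₁x) hBx hBz₁) (by first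
                        | exact hWAp | exact hWAq)) ?_
                intro m hm hmS
                rw [memS] at hmS
                rcases hmS with rfl | rfl | rfl | rfl | rfl | rfl
                · exact Or.inl rfl
                · exact absurd hm hnwy
                · exact absurd hm hnwz
                · exact absurd hm hBu
                · exact absurd hm hnwv
                · exact Or.inr (Or.inl rfl)
            · -- T = {x}
              have hcl : ∀ m, G.Adj w m → m ∈ S → m = x := by
                intro m hm hmS
                rw [memS] at hmS
                rcases hmS with rfl | rfl | rfl | rfl | rfl | rfl
                · rfl
                · exact absurd hm hnwy
                · exact absurd hm hnwz
                · exact absurd hm hBu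
                · exact absurd hm hnwv
                · exact absurd hm hBz₁
              refine SINGLE w x hw hxS hBx (by rw [hψx]; exact hXAx₁) hcl ?_
              refine NOPART w x hw hxS hBx hcl ?_
              intro m hm hmS
              have : m ∈ ({y, v, w} : Set V) := NX ▸ hm
              rcases this with rfl | rfl | rfl
              · exact absurd hyS hmS
              · exact absurd hvS hmS
              · rfl
        · by_cases hBv : G.Adj w v
          · -- w = v₁
            rcases clv w hw hBv with rfl
            have hnwx : ¬G.Adj w x := hBx
            have hnwu : ¬G.Adj w u := fun hh => nadj_uv₁ hh.symm
            have hnwz : ¬G.Adj w z := fun hh => nadj_zv₁ hh.symm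
            by_cases hBy : G.Adj w y
            · rcases cly w hw hBy with rfl | rfl <;>
              · by_cases hBz₁ : G.Adj w z₁
                · -- T = {v, y, z₁}
                  have hg5 : gate5 := by
                    rw [hgate5d]
                    refine ⟨hBz₁, le_trans ?_ (hNole1 w v y z₁ hvS hyS hz₁S (Ne.symm dyv)
                      (Ne.symm nz₁v) (Ne.symm nz₁y) hBv hBy hBz₁)⟩
                    rw [hcsd]; exact Set.ncard_image_le (Set.toFinite _)
                  refine GENA w v y hw hBv hBy (Ne.symm dyv) (by rw [hψv, hψy]; exact hVY)
                    (by rw [hψv];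
                        exact hAScs w VV (hcsle2 w v y hvS hyS (Ne.symm dyv) hBv hBy) hVAv₁)
                    (by rw [hψy];
                        exact hAScs w Y (hcsle2 w v y hvS hyS (Ne.symm dyv) hBv hBy) (by first
                          | exact hYAa | exact hYAb)) ?_
                  intro m hm hmS
                  rw [memS] at hmS
                  rcases hmS with rfl | rfl | rfl | rfl | rfl | rfl
                  · exact absurd hm hnwx
                  · exact Or.inr (Or.inl rfl)
                  · exact absurd hm hnwz
                  · exact absurd hm hnwu
                  · exact Or.inl rfl
                  · refine Or.inr (Or.inr ⟨?_, ?_⟩)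
                    · rw [hψz₁, hψv]; exact Ne.symm (hVgate' hg5)
                    · rw [hψz₁, hψy]; exact Ne.symm hYW
                · -- T = {v, y}
                  refine GENA w v y hw hBv hBy (Ne.symm dyv) (by rw [hψv, hψy]; exact hVY)
                    (by rw [hψv];
                        exact hAScs w VV (hcsle2 w v y hvS hyS (Ne.symm dyv) hBv hBy) hVAv₁)
                    (by rw [hψy];
                        exact hAScs w Y (hcsle2 w v y hvS hyS (Ne.symm dyv) hBv hBy) (by first
                          | exact hYAa | exact hYAb)) ?_
                  intro m hm hmS
                  rw [memS] at hmS
                  rcases hmS with rfl | rfl | rfl | rfl | rfl | rfl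
                  · exact absurd hm hnwx
                  · exact Or.inr (Or.inl rfl)
                  · exact absurd hm hnwz
                  · exact absurd hm hnwu
                  · exact Or.inl rfl
                  · exact absurd hm hBz₁
            · by_cases hBz₁ : G.Adj w z₁
              · -- T = {v, z₁}
                rcases clz₁ w hw hBz₁ with rfl | rfl <;>
                · have hWAS : W ∉ AS w := by first | exact hWAp | exact hWAq
                  have hcs2 : (cs w).ncard ≤ 2 :=
                    hcsle2 w v z₁ hvS hz₁S (Ne.symm nz₁v) hBv hBz₁
                  have hclvz : ∀ m, G.Adj w m → m ∈ S → m = v ∨ m = z₁ := by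
                    intro m hm hmS
                    rw [memS] at hmS
                    rcases hmS with rfl | rfl | rfl | rfl | rfl | rfl
                    · exact absurd hm hnwx
                    · exact absurd hm hBy
                    · exact absurd hm hnwz
                    · exact absurd hm hnwu
                    · exact Or.inl rfl
                    · exact Or.inr rfl
                  by_cases hg : (cs w).ncard ≤ 1
                  · have hg5 : gate5 := by rw [hgate5d]; exact ⟨hBz₁, hg⟩
                    refine GENA w v z₁ hw hBv hBz₁ (Ne.symm nz₁v)
                      (by rw [hψv, hψz₁]; exact hVgate' hg5)
                      (by rw [hψv]; exact hAScs w VV hcs2 hVAv₁)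
                      (by rw [hψz₁]; exact hAScs w W hcs2 hWAS) ?_
                    intro m hm hmS
                    rcases hclvz m hm hmS with rfl | rfl
                    · exact Or.inl rfl
                    · exact Or.inr (Or.inl rfl)
                  · -- cs w has exactly two colors : both outside colors are fresh
                    have hVcs : VV ∉ cs w := hAScs w VV hcs2 hVAv₁
                    have hWcs : W ∉ cs w := hAScs w W hcs2 hWAS
                    have hcsN : (cs w).ncard ≤ (No w).ncard := by
                      rw [hcsd]; exact Set.ncard_image_le (Set.toFinite _)
                    have hNo2' : (No w).ncard = 2 := by
                      have := hNole2 w v z₁ hvS hz₁S (Ne.symm nz₁v) hBv hBz₁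
                      omega
                    obtain ⟨n₁, n₂, hne12, hNo2⟩ := Set.ncard_eq_two.mp hNo2'
                    have hn₁ : n₁ ∈ No w := by rw [hNo2]; exact Or.inl rfl
                    have hn₂ : n₂ ∈ No w := by rw [hNo2]; exact Or.inr rfl
                    have h12 : φ n₁ ≠ φ n₂ := by
                      intro h12
                      apply hg
                      have : cs w ⊆ {φ n₁} := by
                        rintro c ⟨n, hn, rfl⟩
                        rw [hNo2] at hn
                        rcases hn with rfl | rfl
                        · rfl
                        · exact h12.symm
                      exact le_trans (Set.ncard_le_ncard this (Set.toFinite _)) (by simp)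
                    have hmemc : ∀ m, G.Adj w m → m = v ∨ m = z₁ ∨ m = n₁ ∨ m = n₂ := by
                      intro m hm
                      by_cases hmS : m ∈ S
                      · rcases hclvz m hm hmS with rfl | rfl
                        · exact Or.inl rfl
                        · exact Or.inr (Or.inl rfl)
                      · have : m ∈ No w := ⟨hm, hmS⟩
                        rw [hNo2] at this
                        rcases this with rfl | rfl
                        · exact Or.inr (Or.inr (Or.inl rfl))
                        · exact Or.inr (Or.inr (Or.inr rfl))
                    refine le_trans (min_le_left _ _)
                      (two_le_unique G ψ w n₁ n₂ hne12 hn₁.1 hn₂.1 ?_ ?_)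
                    · intro m hm hne
                      rw [hψout _ hn₁.2]
                      rcases hmemc m hm with rfl | rfl | rfl | rfl
                      · rw [hψv]; exact fun hh => hVcs (hh ▸ ⟨n₁, hn₁, rfl⟩)
                      · rw [hψz₁]; exact fun hh => hWcs (hh ▸ ⟨n₁, hn₁, rfl⟩)
                      · exact absurd rfl hne
                      · rw [hψout _ hn₂.2]; exact Ne.symm h12
                    · intro m hm hne
                      rw [hψout _ hn₂.2]
                      rcases hmemc m hm with rfl | rfl | rfl | rfl
                      · rw [hψv]; exact fun hh => hVcs (hh ▸ ⟨n₂, hn₂, rfl⟩)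
                      · rw [hψz₁]; exact fun hh => hWcs (hh ▸ ⟨n₂, hn₂, rfl⟩)
                      · rw [hψout _ hn₁.2]; exact h12
                      · exact absurd rfl hne
              · -- T = {v}
                have hcl : ∀ m, G.Adj w m → m ∈ S → m = v := by
                  intro m hm hmS
                  rw [memS] at hmS
                  rcases hmS with rfl | rfl | rfl | rfl | rfl | rfl
                  · exact absurd hm hnwx
                  · exact absurd hm hBy
                  · exact absurd hm hnwz
                  · exact absurd hm hnwu
                  · rfl
                  · exact absurd hm hBz₁
                refine SINGLE w v hw hvS hBv (by rw [hψv]; exact hVAv₁) hcl ?_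
                refine NOPART w v hw hvS hBv hcl ?_
                intro m hm hmS
                have : m ∈ ({u, x, w} : Set V) := NV ▸ hm
                rcases this with rfl | rfl | rfl
                · exact absurd huS hmS
                · exact absurd hxS hmS
                · rfl
          · -- w is adjacent to none of x, v, z : T ⊆ {y, u, z₁}
            have hnwz : ¬G.Adj w z := fun hh => clz w hw hh
            by_cases hBy : G.Adj w y
            · by_cases hBu : G.Adj w u
              · -- includes y and u
                rcases cly w hw hBy with rfl | rfl <;> rcases clu w hw hBu with rfl | rfl <;>
                · have hYAS : Y ∉ AS w := by first | exact hYAa | exact hYAb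
                  have hUAS : U ∉ AS w := by first | exact hUAc | exact hUAd
                  have hcs2 : (cs w).ncard ≤ 2 := hcsle2 w y u hyS huS dyu hBy hBu
                  by_cases hBz₁ : G.Adj w z₁
                  · -- T = {y, u, z₁}
                    refine GENA w y u hw hBy hBu dyu (by rw [hψy, hψu]; exact hYU)
                      (by rw [hψy]; exact hAScs w Y hcs2 hYAS)
                      (by rw [hψu]; exact hAScs w U hcs2 hUAS) ?_
                    intro m hm hmS
                    rw [memS] at hmS
                    rcases hmS with rfl | rfl | rfl | rfl | rfl | rfl
                    · exact absurd hm hBx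
                    · exact Or.inl rfl
                    · exact absurd hm hnwz
                    · exact Or.inr (Or.inl rfl)
                    · exact absurd hm hBv
                    · refine Or.inr (Or.inr ⟨?_, ?_⟩)
                      · rw [hψz₁, hψy]; exact Ne.symm hYW
                      · rw [hψz₁, hψu]; exact Ne.symm hUW
                  · -- T = {y, u}
                    refine GENA w y u hw hBy hBu dyu (by rw [hψy, hψu]; exact hYU)
                      (by rw [hψy]; exact hAScs w Y hcs2 hYAS)
                      (by rw [hψu]; exact hAScs w U hcs2 hUAS) ?_
                    intro m hm hmS
                    rw [memS] at hmS
                    rcases hmS with rfl | rfl | rfl | rfl | rfl | rfl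
                    · exact absurd hm hBx
                    · exact Or.inl rfl
                    · exact absurd hm hnwz
                    · exact Or.inr (Or.inl rfl)
                    · exact absurd hm hBv
                    · exact absurd hm hBz₁
              · by_cases hBz₁ : G.Adj w z₁
                · -- T = {y, z₁}
                  rcases cly w hw hBy with rfl | rfl <;> rcases clz₁ w hw hBz₁ with rfl | rfl <;>
                  · have hYAS : Y ∉ AS w := by first | exact hYAa | exact hYAb
                    have hWAS : W ∉ AS w := by first | exact hWAp | exact hWAq
                    have hcs2 : (cs w).ncard ≤ 2 :=
                      hcsle2 w y z₁ hyS hz₁S (Ne.symm nz₁y) hBy hBz₁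
                    refine GENA w y z₁ hw hBy hBz₁ (Ne.symm nz₁y) (by rw [hψy, hψz₁]; exact hYW)
                      (by rw [hψy]; exact hAScs w Y hcs2 hYAS)
                      (by rw [hψz₁]; exact hAScs w W hcs2 hWAS) ?_
                    intro m hm hmS
                    rw [memS] at hmS
                    rcases hmS with rfl | rfl | rfl | rfl | rfl | rfl
                    · exact absurd hm hBx
                    · exact Or.inl rfl
                    · exact absurd hm hnwz
                    · exact absurd hm hBu
                    · exact absurd hm hBv
                    · exact Or.inr (Or.inl rfl)
                · -- T = {y}
                  have hcl : ∀ m, G.Adj w m → m ∈ S → m = y := by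
                    intro m hm hmS
                    rw [memS] at hmS
                    rcases hmS with rfl | rfl | rfl | rfl | rfl | rfl
                    · exact absurd hm hBx
                    · rfl
                    · exact absurd hm hnwz
                    · exact absurd hm hBu
                    · exact absurd hm hBv
                    · exact absurd hm hBz₁
                  rcases cly w hw hBy with rfl | rfl
                  · refine SINGLE w y hw hyS hBy (by rw [hψy]; exact hYAa) hcl ?_
                    refine PART w b₂ y hw hb₂S (Ne.symm dab) hyS hBy hyb
                      (fun hh => nadj_ab hh) hcl ?_
                    intro m hm hmS
                    exact cly m hmS hm.symm
                  · refine SINGLE w y hw hyS hBy (by rw [hψy]; exact hYAb) hcl ?_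
                    refine PART w a₂ y hw ha₂S dab hyS hBy hya
                      (fun hh => nadj_ab hh.symm) hcl ?_
                    intro m hm hmS
                    exact (cly m hmS hm.symm).symm
            · by_cases hBu : G.Adj w u
              · by_cases hBz₁ : G.Adj w z₁
                · -- T = {u, z₁}
                  rcases clu w hw hBu with rfl | rfl <;> rcases clz₁ w hw hBz₁ with rfl | rfl <;>
                  · have hUAS : U ∉ AS w := by first | exact hUAc | exact hUAd
                    have hWAS : W ∉ AS w := by first | exact hWAp | exact hWAq
                    have hcs2 : (cs w).ncard ≤ 2 :=
                      hcsle2 w u z₁ huS hz₁S (Ne.symm nz₁u) hBu hBz₁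
                    refine GENA w u z₁ hw hBu hBz₁ (Ne.symm nz₁u) (by rw [hψu, hψz₁]; exact hUW)
                      (by rw [hψu]; exact hAScs w U hcs2 hUAS)
                      (by rw [hψz₁]; exact hAScs w W hcs2 hWAS) ?_
                    intro m hm hmS
                    rw [memS] at hmS
                    rcases hmS with rfl | rfl | rfl | rfl | rfl | rfl
                    · exact absurd hm hBx
                    · exact absurd hm hBy
                    · exact absurd hm hnwz
                    · exact Or.inl rfl
                    · exact absurd hm hBv
                    · exact Or.inr (Or.inl rfl)
                · -- T = {u}
                  have hcl : ∀ m, G.Adj w m → m ∈ S → m = u := by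
                    intro m hm hmS
                    rw [memS] at hmS
                    rcases hmS with rfl | rfl | rfl | rfl | rfl | rfl
                    · exact absurd hm hBx
                    · exact absurd hm hBy
                    · exact absurd hm hnwz
                    · rfl
                    · exact absurd hm hBv
                    · exact absurd hm hBz₁
                  rcases clu w hw hBu with rfl | rfl
                  · refine SINGLE w u hw huS hBu (by rw [hψu]; exact hUAc) hcl ?_
                    refine PART w d₂ u hw hd₂S (Ne.symm dcd) huS hBu hud
                      (fun hh => nadj_cd hh) hcl ?_
                    intro m hm hmS
                    exact clu m hmS hm.symm
                  · refine SINGLE w u hw huS hBu (by rw [hψu]; exact hUAd) hcl ?_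
                    refine PART w c₂ u hw hc₂S dcd huS hBu huc
                      (fun hh => nadj_cd hh.symm) hcl ?_
                    intro m hm hmS
                    exact (clu m hmS hm.symm).symm
              · by_cases hBz₁ : G.Adj w z₁
                · -- T = {z₁}
                  have hcl : ∀ m, G.Adj w m → m ∈ S → m = z₁ := by
                    intro m hm hmS
                    rw [memS] at hmS
                    rcases hmS with rfl | rfl | rfl | rfl | rfl | rfl
                    · exact absurd hm hBx
                    · exact absurd hm hBy
                    · exact absurd hm hnwz
                    · exact absurd hm hBu
                    · exact absurd hm hBv
                    · rfl
                  rcases clz₁ w hw hBz₁ with rfl | rfl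
                  · refine SINGLE w z₁ hw hz₁S hBz₁ (by rw [hψz₁]; exact hWAp) hcl ?_
                    refine PART w q₂ z₁ hw hq₂S (Ne.symm dpq) hz₁S hBz₁ hz₁q
                      (fun hh => nadj_pq hh) hcl ?_
                    intro m hm hmS
                    exact clz₁ m hmS hm.symm
                  · refine SINGLE w z₁ hw hz₁S hBz₁ (by rw [hψz₁]; exact hWAq) hcl ?_
                    refine PART w p₂ z₁ hw hp₂S dpq hz₁S hBz₁ hz₁p
                      (fun hh => nadj_pq hh.symm) hcl ?_
                    intro m hm hmS
                    exact (clz₁ m hmS hm.symm).symm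
                · -- no neighbor in S at all : contradiction
                  exfalso
                  rw [memS] at hs₀S
                  rcases hs₀S with rfl | rfl | rfl | rfl | rfl | rfl
                  · exact hBx hs₀a
                  · exact hBy hs₀a
                  · exact hnwz hs₀a
                  · exact hBu hs₀a
                  · exact hBv hs₀a
                  · exact hBz₁ hs₀a
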